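/- arXiv:1708.02753 — 3 statements merged into one kernel-verified Lean document; each statement's English description precedes it below -/
import Mathlib

section
/- Let T>0, K>0, ρ>0 and A ∈ C([0,T];C¹_b(ℝ³;ℝ³)). There exists a constant C>0 depending only on T, ρ, K and ‖A‖_{L²(0,T;C¹_b)} such that for any two fields B, B̃ ∈ C([0,T];C¹_b(ℝ³;ℝ³)) with ‖B‖_{L²(0,T;C¹_b)} ≤ K and ‖B̃‖_{L²(0,T;C¹_b)} ≤ K, the characteristic flows Z and Z̃ of Ẋ = V, V̇ = A(s,X) + V×B(s,X) (resp. with B̃), normalized by Z(t,t,z) = z, satisfy sup_{z∈B_ρ(0)} |Z(s,t,z) − Z̃(s,t,z)| ≤ C ‖B − B̃‖_{L²(0,T;L∞)} for all s,t ∈ [0,T]. -/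
open MeasureTheory Set
open scoped Classical

noncomputable section

abbrev V3 : Type := Fin 3 → ℝ
abbrev Z6 : Type := V3 × V3

def dot3 (a b : V3) : ℝ := ∑ i, a i * b i

def cross3 (a b : V3) : V3 :=
  ![a 1 * b 2 - a 2 * b 1, a 2 * b 0 - a 0 * b 2, a 0 * b 1 - a 1 * b 0]

def enorm3 (x : V3) : ℝ := Real.sqrt (∑ i, (x i) ^ 2)

def enorm6 (z : Z6) : ℝ := Real.sqrt (enorm3 z.1 ^ 2 + enorm3 z.2 ^ 2)

def grad3 (u : V3 → ℝ) (x : V3) : V3 := fun i => fderiv ℝ u x (Pi.single i 1)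

def gradx (f : Z6 → ℝ) (z : Z6) : V3 := grad3 (fun x => f (x, z.2)) z.1

def gradv (f : Z6 → ℝ) (z : Z6) : V3 := grad3 (fun v => f (z.1, v)) z.2

def rhoF (f : Z6 → ℝ) (x : V3) : ℝ := ∫ v : V3, f (x, v)

def psiF (f : Z6 → ℝ) (x : V3) : ℝ := ∫ y : V3, rhoF f y / enorm3 (x - y)

def PhiF (a f : Z6 → ℝ) (x : V3) : ℝ :=
  -∫ y : V3, ∫ w : V3, dot3 ((enorm3 (x - y) ^ 3)⁻¹ • (x - y)) (gradv a (y, w)) * f (y, w)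

def supL2 (T : ℝ) (A : ℝ → V3 → V3) : ℝ :=
  Real.sqrt (∫ τ in (0:ℝ)..T, (⨆ x : V3, enorm3 (A τ x)) ^ 2)

def zeta (T : ℝ) (A : ℝ → V3 → V3) (ρ : ℝ) : ℝ :=
  Real.exp (2 * T) * (ρ + Real.sqrt T * supL2 T A)

def charRHS (A B : ℝ → V3 → V3) (s : ℝ) (z : Z6) : Z6 :=
  (z.2, A s z.1 + cross3 z.2 (B s z.1))

def IsCharFlow (T : ℝ) (A B : ℝ → V3 → V3) (Z : ℝ → ℝ → Z6 → Z6) : Prop :=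
  ∀ t ∈ Icc (0:ℝ) T, ∀ z : Z6, Z t t z = z ∧
    ∀ s ∈ Icc (0:ℝ) T,
      HasDerivWithinAt (fun σ => Z σ t z) (charRHS A B s (Z s t z)) (Icc (0:ℝ) T) s

def FamC1bV (T : ℝ) (A : ℝ → V3 → V3) : Prop :=
  ContinuousOn (fun p : ℝ × V3 => A p.1 p.2) (Icc (0:ℝ) T ×ˢ (univ : Set V3)) ∧
  (∀ t ∈ Icc (0:ℝ) T, ContDiff ℝ 1 (A t)) ∧
  ContinuousOn (fun p : ℝ × V3 => fderiv ℝ (A p.1) p.2) (Icc (0:ℝ) T ×ˢ (univ : Set V3)) ∧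
  ∃ M : ℝ, ∀ t ∈ Icc (0:ℝ) T, ∀ x : V3, enorm3 (A t x) ≤ M ∧ ‖fderiv ℝ (A t) x‖ ≤ M

def FamC1γV (T γ : ℝ) (A : ℝ → V3 → V3) : Prop :=
  FamC1bV T A ∧
  ∃ L : ℝ, ∀ t ∈ Icc (0:ℝ) T, ∀ x y : V3,
    ‖fderiv ℝ (A t) x - fderiv ℝ (A t) y‖ ≤ L * enorm3 (x - y) ^ γ

def FamC1bZ (T : ℝ) (a : ℝ → Z6 → ℝ) : Prop :=
  ContinuousOn (fun p : ℝ × Z6 => a p.1 p.2) (Icc (0:ℝ) T ×ˢ (univ : Set Z6)) ∧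
  (∀ t ∈ Icc (0:ℝ) T, ContDiff ℝ 1 (a t)) ∧
  ContinuousOn (fun p : ℝ × Z6 => fderiv ℝ (a p.1) p.2) (Icc (0:ℝ) T ×ˢ (univ : Set Z6)) ∧
  ∃ M : ℝ, ∀ t ∈ Icc (0:ℝ) T, ∀ z : Z6, |a t z| ≤ M ∧ ‖fderiv ℝ (a t) z‖ ≤ M

def FamC1bZ3 (T : ℝ) (Cc : ℝ → Z6 → V3) : Prop :=
  ContinuousOn (fun p : ℝ × Z6 => Cc p.1 p.2) (Icc (0:ℝ) T ×ˢ (univ : Set Z6)) ∧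
  (∀ t ∈ Icc (0:ℝ) T, ContDiff ℝ 1 (Cc t)) ∧
  ContinuousOn (fun p : ℝ × Z6 => fderiv ℝ (Cc p.1) p.2) (Icc (0:ℝ) T ×ˢ (univ : Set Z6)) ∧
  ∃ M : ℝ, ∀ t ∈ Icc (0:ℝ) T, ∀ z : Z6, enorm3 (Cc t z) ≤ M ∧ ‖fderiv ℝ (Cc t) z‖ ≤ M

def SuppBall {α : Type*} [Zero α] (T r : ℝ) (f : ℝ → Z6 → α) : Prop :=
  ∀ t ∈ Icc (0:ℝ) T, ∀ z : Z6, r < enorm6 z → f t z = 0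

def SuppBall0 {α : Type*} [Zero α] (r : ℝ) (u : Z6 → α) : Prop :=
  ∀ z : Z6, r < enorm6 z → u z = 0

def IsCutoff (r₁ r₂ : ℝ) (χ : Z6 → ℝ) : Prop :=
  ContDiff ℝ 1 χ ∧ HasCompactSupport χ ∧ (∀ z, χ z ∈ Icc (0:ℝ) 1) ∧
  (∀ z : Z6, enorm6 z ≤ r₁ → χ z = 1) ∧ (∀ z : Z6, r₂ < enorm6 z → χ z = 0)

def vlasovRHS (a b : ℝ → Z6 → ℝ) (Cc : ℝ → Z6 → V3) (χ : Z6 → ℝ)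
    (f : ℝ → Z6 → ℝ) (s : ℝ) (z : Z6) : ℝ :=
  dot3 (grad3 (psiF (f s)) z.1) (Cc s z) + χ z * PhiF (a s) (f s) z.1 + b s z

def transportT (A B : ℝ → V3 → V3) (f : ℝ → Z6 → ℝ) (s : ℝ) (z : Z6) : ℝ :=
  dot3 z.2 (gradx (f s) z) + dot3 (A s z.1) (gradv (f s) z)
    + dot3 (cross3 z.2 (B s z.1)) (gradv (f s) z)

def IsC1on (T : ℝ) (f : ℝ → Z6 → ℝ) : Prop :=
  ContDiffOn ℝ 1 (fun p : ℝ × Z6 => f p.1 p.2) (Icc (0:ℝ) T ×ˢ (univ : Set Z6))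

def SolvesLinVlasov (T : ℝ) (a b : ℝ → Z6 → ℝ) (A B : ℝ → V3 → V3)
    (Cc : ℝ → Z6 → V3) (χ : Z6 → ℝ) (f : ℝ → Z6 → ℝ) : Prop :=
  ∀ t ∈ Icc (0:ℝ) T, ∀ z : Z6,
    HasDerivWithinAt (fun τ => f τ z)
      (vlasovRHS a b Cc χ f t z - transportT A B f t z) (Icc (0:ℝ) T) t

def fieldC1bNorm (u : V3 → V3) : ℝ :=
  (⨆ x : V3, enorm3 (u x)) + ⨆ x : V3, ‖fderiv ℝ u x‖

def fieldL2C1b (T : ℝ) (A : ℝ → V3 → V3) : ℝ :=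
  Real.sqrt (∫ τ in (0:ℝ)..T, fieldC1bNorm (A τ) ^ 2)

def holderSemi (γ : ℝ) (u : V3 → V3) : ℝ :=
  ⨆ p : Z6, (if p.1 = p.2 then 0
    else ‖fderiv ℝ u p.1 - fderiv ℝ u p.2‖ / enorm3 (p.1 - p.2) ^ γ)

def fieldL2C1γ (T γ : ℝ) (A : ℝ → V3 → V3) : ℝ :=
  Real.sqrt (∫ τ in (0:ℝ)..T, (fieldC1bNorm (A τ) + holderSemi γ (A τ)) ^ 2)

def fieldL2Linf (T : ℝ) (A : ℝ → V3 → V3) : ℝ := supL2 T A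

def fieldOf (lam : ℝ) (f g : Z6 → ℝ) (x : V3) : V3 :=
  (-(1 / (4 * Real.pi * lam))) •
    ∫ y : V3, ∫ w : V3, ((enorm3 (x - y))⁻¹ * g (y, w)) • cross3 w (gradv f (y, w))

/-! ### Auxiliary lemmas -/

section Aux

lemma enorm3_nonneg (x : V3) : 0 ≤ enorm3 x := Real.sqrt_nonneg _

lemma norm_le_enorm3 (x : V3) : ‖x‖ ≤ enorm3 x := by
  rw [pi_norm_le_iff_of_nonneg (enorm3_nonneg x)]
  intro i
  rw [Real.norm_eq_abs, ← Real.sqrt_sq_eq_abs]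
  apply Real.sqrt_le_sqrt
  have : ∀ j ∈ Finset.univ, (0:ℝ) ≤ (x j)^2 := fun j _ => sq_nonneg _
  exact Finset.single_le_sum this (Finset.mem_univ i)

lemma enorm3_le (x : V3) : enorm3 x ≤ Real.sqrt 3 * ‖x‖ := by
  have h : ∀ i, (x i)^2 ≤ ‖x‖^2 := by
    intro i
    have h1 := norm_le_pi_norm x i
    rw [Real.norm_eq_abs] at h1
    calc (x i)^2 = |x i|^2 := (sq_abs _).symm
    _ ≤ ‖x‖^2 := by nlinarith [abs_nonneg (x i)]
  have : (∑ i, (x i)^2) ≤ 3 * ‖x‖^2 := by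
    have := Finset.sum_le_sum (fun i (_ : i ∈ Finset.univ) => h i)
    simpa [Finset.sum_const, Finset.card_univ] using this
  calc enorm3 x ≤ Real.sqrt (3 * ‖x‖^2) := Real.sqrt_le_sqrt this
  _ = Real.sqrt 3 * ‖x‖ := by
      rw [Real.sqrt_mul (by norm_num), Real.sqrt_sq (norm_nonneg x)]

lemma norm_le_enorm6 (z : Z6) : ‖z‖ ≤ enorm6 z := by
  have h1 : enorm3 z.1 ≤ enorm6 z := by
    rw [← Real.sqrt_sq (enorm3_nonneg z.1)]
    exact Real.sqrt_le_sqrt (by nlinarith [sq_nonneg (enorm3 z.2)])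
  have h2 : enorm3 z.2 ≤ enorm6 z := by
    rw [← Real.sqrt_sq (enorm3_nonneg z.2)]
    exact Real.sqrt_le_sqrt (by nlinarith [sq_nonneg (enorm3 z.1)])
  rw [Prod.norm_def]
  exact max_le ((norm_le_enorm3 _).trans h1) ((norm_le_enorm3 _).trans h2)

lemma enorm6_le (z : Z6) : enorm6 z ≤ Real.sqrt 6 * ‖z‖ := by
  have h1 : enorm3 z.1 ≤ Real.sqrt 3 * ‖z‖ := (enorm3_le _).trans (by
    have := le_max_left ‖z.1‖ ‖z.2‖
    rw [Prod.norm_def]; nlinarith [Real.sqrt_nonneg 3])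
  have h2 : enorm3 z.2 ≤ Real.sqrt 3 * ‖z‖ := (enorm3_le _).trans (by
    have := le_max_right ‖z.1‖ ‖z.2‖
    rw [Prod.norm_def]; nlinarith [Real.sqrt_nonneg 3])
  have h3 : enorm3 z.1 ^2 + enorm3 z.2 ^2 ≤ 6 * ‖z‖^2 := by
    have e3 : Real.sqrt 3 ^ 2 = 3 := Real.sq_sqrt (by norm_num)
    nlinarith [enorm3_nonneg z.1, enorm3_nonneg z.2, norm_nonneg z, Real.sqrt_nonneg 3]
  calc enorm6 z ≤ Real.sqrt (6 * ‖z‖^2) := Real.sqrt_le_sqrt h3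
  _ = Real.sqrt 6 * ‖z‖ := by rw [Real.sqrt_mul (by norm_num), Real.sqrt_sq (norm_nonneg z)]

lemma cross3_norm_le (a b : V3) : ‖cross3 a b‖ ≤ 2 * ‖a‖ * ‖b‖ := by
  have ha : ∀ i, |a i| ≤ ‖a‖ := fun i => by
    have := norm_le_pi_norm a i; rwa [Real.norm_eq_abs] at this
  have hb : ∀ i, |b i| ≤ ‖b‖ := fun i => by
    have := norm_le_pi_norm b i; rwa [Real.norm_eq_abs] at this
  rw [pi_norm_le_iff_of_nonneg (by positivity)]
  intro i
  fin_cases i <;>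
  · simp only [cross3, Real.norm_eq_abs, Matrix.cons_val_zero, Matrix.cons_val_one,
      Matrix.head_cons, Matrix.cons_val_two, Matrix.tail_cons]
    refine (abs_sub _ _).trans ?_
    rw [abs_mul, abs_mul]
    nlinarith [ha 0, ha 1, ha 2, hb 0, hb 1, hb 2, abs_nonneg (a 0), abs_nonneg (a 1),
      abs_nonneg (a 2), abs_nonneg (b 0), abs_nonneg (b 1), abs_nonneg (b 2),
      norm_nonneg a, norm_nonneg b]

lemma cross3_decomp (v v' b bm b'' : V3) :
    cross3 v b - cross3 v' b'' =
      cross3 (v - v') b + cross3 v' (b - bm) + cross3 v' (bm - b'') := by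
  funext i
  fin_cases i <;>
  · simp [cross3, Pi.sub_apply]
    ring

lemma continuous_vec3 {α : Type*} [TopologicalSpace α] {f g h : α → ℝ}
    (hf : Continuous f) (hg : Continuous g) (hh : Continuous h) :
    Continuous fun a => (![f a, g a, h a] : V3) := by
  apply continuous_pi
  intro i
  fin_cases i
  · exact hf
  · exact hg
  · exact hh

lemma continuous_cross3 : Continuous (fun p : V3 × V3 => cross3 p.1 p.2) := by
  unfold cross3
  exact continuous_vec3 (by fun_prop) (by fun_prop) (by fun_prop)

lemma continuous_enorm3 : Continuous enorm3 := by
  unfold enorm3; fun_prop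

end Aux

section Gronwall

open intervalIntegral

variable {E : Type*} [NormedAddCommGroup E] [NormedSpace ℝ E] [CompleteSpace E]

lemma norm_sub_le_integral_aux {T a c : ℝ} (ha : 0 ≤ a) (hac : a ≤ c) (hcT : c ≤ T)
    {f f' : ℝ → E}
    (hf : ∀ s ∈ Icc (0:ℝ) T, HasDerivWithinAt f (f' s) (Icc (0:ℝ) T) s)
    (hf'c : ContinuousOn f' (Icc (0:ℝ) T)) :
    ‖f c - f a‖ ≤ ∫ τ in a..c, ‖f' τ‖ := by
  have hsub : Icc a c ⊆ Icc 0 T := Icc_subset_Icc ha hcT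
  have hfc : ContinuousOn f (Icc (0:ℝ) T) := fun s hs => (hf s hs).continuousWithinAt
  have hint : IntervalIntegrable f' volume a c :=
    (hf'c.mono (by rw [uIcc_of_le hac]; exact hsub)).intervalIntegrable
  have heq : ∫ τ in a..c, f' τ = f c - f a := by
    apply integral_eq_sub_of_hasDeriv_right_of_le hac (hfc.mono hsub) ?_ hint
    intro x hx
    have hx' : x ∈ Icc (0:ℝ) T := hsub (Ioo_subset_Icc_self hx)
    have hmem : Icc (0:ℝ) T ∈ nhds x :=
      Icc_mem_nhds (lt_of_le_of_lt ha hx.1) (lt_of_lt_of_le hx.2 hcT)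
    exact ((hf x hx').hasDerivAt hmem).hasDerivWithinAt
  rw [← heq]
  exact intervalIntegral.norm_integral_le_integral_norm hac

/-- One-step Gronwall on a subinterval where the Lipschitz budget is ≤ 1/2. -/
lemma gronwall_step {T a b : ℝ} (ha : 0 ≤ a) (hab : a ≤ b) (hbT : b ≤ T)
    {f f' : ℝ → E} {L h : ℝ → ℝ}
    (hf : ∀ s ∈ Icc (0:ℝ) T, HasDerivWithinAt f (f' s) (Icc (0:ℝ) T) s)
    (hf'c : ContinuousOn f' (Icc (0:ℝ) T))
    (hLint : IntervalIntegrable L volume 0 T) (hLnn : ∀ s ∈ Icc (0:ℝ) T, 0 ≤ L s)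
    (hhint : IntervalIntegrable h volume 0 T) (hhnn : ∀ s ∈ Icc (0:ℝ) T, 0 ≤ h s)
    (hbound : ∀ s ∈ Icc (0:ℝ) T, ‖f' s‖ ≤ L s * ‖f s‖ + h s)
    (hsmall : ∫ τ in a..b, L τ ≤ 1/2) :
    ∀ s ∈ Icc a b, (‖f s‖ ≤ 2 * ‖f a‖ + 2 * ∫ τ in (0:ℝ)..T, h τ)
      ∧ (‖f s‖ ≤ 2 * ‖f b‖ + 2 * ∫ τ in (0:ℝ)..T, h τ) := by
  have hsub : Icc a b ⊆ Icc 0 T := Icc_subset_Icc ha hbT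
  have hT0 : (0:ℝ) ≤ T := ha.trans (hab.trans hbT)
  have hfc : ContinuousOn f (Icc (0:ℝ) T) := fun s hs => (hf s hs).continuousWithinAt
  have hmono : ∀ (g : ℝ → ℝ), IntervalIntegrable g volume 0 T →
      ∀ d e : ℝ, 0 ≤ d → d ≤ e → e ≤ T → IntervalIntegrable g volume d e := by
    intro g hg d e hd hde heT
    exact hg.mono_set (by rw [uIcc_of_le hde, uIcc_of_le hT0]; exact Icc_subset_Icc hd heT)
  have hnnIoc : ∀ (g : ℝ → ℝ), (∀ s ∈ Icc (0:ℝ) T, 0 ≤ g s) → ∀ d e : ℝ, 0 ≤ d → e ≤ T →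
      (0:ℝ → ℝ) ≤ᵐ[volume.restrict (Ioc d e)] g := by
    intro g hg d e hd heT
    filter_upwards [ae_restrict_mem measurableSet_Ioc] with τ hτ
    exact hg τ ⟨hd.trans (le_of_lt hτ.1), hτ.2.trans heT⟩
  have hintsub : ∀ (g : ℝ → ℝ), IntervalIntegrable g volume 0 T →
      (∀ s ∈ Icc (0:ℝ) T, 0 ≤ g s) → ∀ d e d' e' : ℝ, 0 ≤ d' → d' ≤ d → d ≤ e → e ≤ e' →
      e' ≤ T → (∫ τ in d..e, g τ) ≤ ∫ τ in d'..e', g τ := by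
    intro g hg hgn d e d' e' hd' hd'd hde hee' he'T
    exact intervalIntegral.integral_mono_interval hd'd hde hee'
      (hnnIoc g hgn d' e' hd' he'T) (hmono g hg d' e' hd' (hd'd.trans (hde.trans hee')) he'T)
  set H := ∫ τ in (0:ℝ)..T, h τ with hHdef
  have hHnn : 0 ≤ H := intervalIntegral.integral_nonneg hT0 (fun u hu => hhnn u hu)
  obtain ⟨c, hc, hcmax⟩ := (isCompact_Icc (a := a) (b := b)).exists_isMaxOn
    (nonempty_Icc.2 hab) ((hfc.mono hsub).norm)
  have hcmax' : ∀ s ∈ Icc a b, ‖f s‖ ≤ ‖f c‖ := fun s hs => hcmax hs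
  have key : ∀ (d e : ℝ), a ≤ d → d ≤ e → e ≤ b → ‖f e‖ ≤ ‖f d‖ + (1/2) * ‖f c‖ + H := by
    intro d e had hde heb
    have hd0 : 0 ≤ d := ha.trans had
    have heT : e ≤ T := heb.trans hbT
    have h1 : ‖f e - f d‖ ≤ ∫ τ in d..e, ‖f' τ‖ :=
      norm_sub_le_integral_aux hd0 hde heT hf hf'c
    have h2 : ∫ τ in d..e, ‖f' τ‖ ≤ ∫ τ in d..e, (L τ * ‖f c‖ + h τ) := by
      apply intervalIntegral.integral_mono_on hde
      · have hcont : ContinuousOn (fun τ => ‖f' τ‖) (uIcc d e) :=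
          hf'c.norm.mono (by rw [uIcc_of_le hde]; exact Icc_subset_Icc hd0 heT)
        exact hcont.intervalIntegrable
      · exact ((hmono L hLint d e hd0 hde heT).mul_const _).add (hmono h hhint d e hd0 hde heT)
      · intro τ hτ
        have hτT : τ ∈ Icc (0:ℝ) T := Icc_subset_Icc hd0 heT hτ
        have hb1 := hbound τ hτT
        have hfτ : ‖f τ‖ ≤ ‖f c‖ := hcmax' τ (Icc_subset_Icc had heb hτ)
        nlinarith [hLnn τ hτT]
    have h3 : ∫ τ in d..e, (L τ * ‖f c‖ + h τ)
        = (∫ τ in d..e, L τ) * ‖f c‖ + ∫ τ in d..e, h τ := by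
      rw [intervalIntegral.integral_add ((hmono L hLint d e hd0 hde heT).mul_const _)
        (hmono h hhint d e hd0 hde heT), intervalIntegral.integral_mul_const]
    have h4 : (∫ τ in d..e, L τ) * ‖f c‖ ≤ (1/2) * ‖f c‖ := by
      apply mul_le_mul_of_nonneg_right _ (norm_nonneg _)
      calc (∫ τ in d..e, L τ) ≤ ∫ τ in a..b, L τ :=
            hintsub L hLint hLnn d e a b ha had hde heb hbT
        _ ≤ 1/2 := hsmall
    have h5 : ∫ τ in d..e, h τ ≤ H :=
      hintsub h hhint hhnn d e 0 T le_rfl hd0 hde heT le_rfl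
    have h6 := norm_sub_norm_le (f e) (f d)
    linarith
  have keyR : ∀ (d e : ℝ), a ≤ d → d ≤ e → e ≤ b → ‖f d‖ ≤ ‖f e‖ + (1/2) * ‖f c‖ + H := by
    intro d e had hde heb
    have hd0 : 0 ≤ d := ha.trans had
    have heT : e ≤ T := heb.trans hbT
    have h1 : ‖f d - f e‖ ≤ ∫ τ in d..e, ‖f' τ‖ := by
      rw [norm_sub_rev]; exact norm_sub_le_integral_aux hd0 hde heT hf hf'c
    have h2 : ∫ τ in d..e, ‖f' τ‖ ≤ ∫ τ in d..e, (L τ * ‖f c‖ + h τ) := by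
      apply intervalIntegral.integral_mono_on hde
      · have hcont : ContinuousOn (fun τ => ‖f' τ‖) (uIcc d e) :=
          hf'c.norm.mono (by rw [uIcc_of_le hde]; exact Icc_subset_Icc hd0 heT)
        exact hcont.intervalIntegrable
      · exact ((hmono L hLint d e hd0 hde heT).mul_const _).add (hmono h hhint d e hd0 hde heT)
      · intro τ hτ
        have hτT : τ ∈ Icc (0:ℝ) T := Icc_subset_Icc hd0 heT hτ
        have hb1 := hbound τ hτT
        have hfτ : ‖f τ‖ ≤ ‖f c‖ := hcmax' τ (Icc_subset_Icc had heb hτ)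
        nlinarith [hLnn τ hτT]
    have h3 : ∫ τ in d..e, (L τ * ‖f c‖ + h τ)
        = (∫ τ in d..e, L τ) * ‖f c‖ + ∫ τ in d..e, h τ := by
      rw [intervalIntegral.integral_add ((hmono L hLint d e hd0 hde heT).mul_const _)
        (hmono h hhint d e hd0 hde heT), intervalIntegral.integral_mul_const]
    have h4 : (∫ τ in d..e, L τ) * ‖f c‖ ≤ (1/2) * ‖f c‖ := by
      apply mul_le_mul_of_nonneg_right _ (norm_nonneg _)
      calc (∫ τ in d..e, L τ) ≤ ∫ τ in a..b, L τ :=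
            hintsub L hLint hLnn d e a b ha had hde heb hbT
        _ ≤ 1/2 := hsmall
    have h5 : ∫ τ in d..e, h τ ≤ H :=
      hintsub h hhint hhnn d e 0 T le_rfl hd0 hde heT le_rfl
    have h6 := norm_sub_norm_le (f d) (f e)
    linarith
  have hcb1 : ‖f c‖ ≤ 2 * ‖f a‖ + 2 * H := by
    have := key a c le_rfl hc.1 hc.2; linarith
  have hcb2 : ‖f c‖ ≤ 2 * ‖f b‖ + 2 * H := by
    have := keyR c b hc.1 hc.2 le_rfl; linarith
  intro s hs
  exact ⟨(hcmax' s hs).trans hcb1, (hcmax' s hs).trans hcb2⟩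

/-- Chained Gronwall: `n` steps of budget `δ` away from the anchor `t`. -/
lemma gronwall_chain {T δ : ℝ} (hδ : 0 < δ)
    {f f' : ℝ → E} {L h : ℝ → ℝ}
    (hf : ∀ s ∈ Icc (0:ℝ) T, HasDerivWithinAt f (f' s) (Icc (0:ℝ) T) s)
    (hf'c : ContinuousOn f' (Icc (0:ℝ) T))
    (hLint : IntervalIntegrable L volume 0 T) (hLnn : ∀ s ∈ Icc (0:ℝ) T, 0 ≤ L s)
    (hhint : IntervalIntegrable h volume 0 T) (hhnn : ∀ s ∈ Icc (0:ℝ) T, 0 ≤ h s)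
    (hbound : ∀ s ∈ Icc (0:ℝ) T, ‖f' s‖ ≤ L s * ‖f s‖ + h s)
    (hsmall : ∀ a b : ℝ, 0 ≤ a → a ≤ b → b ≤ T → b - a ≤ δ → ∫ τ in a..b, L τ ≤ 1/2)
    {t : ℝ} (ht : t ∈ Icc (0:ℝ) T) :
    ∀ n : ℕ, ∀ s ∈ Icc (0:ℝ) T, |s - t| ≤ n * δ →
      ‖f s‖ ≤ 4^n * (‖f t‖ + ∫ τ in (0:ℝ)..T, h τ) := by
  have hT0 : (0:ℝ) ≤ T := ht.1.trans ht.2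
  set H := ∫ τ in (0:ℝ)..T, h τ with hHdef
  have hHnn : 0 ≤ H := intervalIntegral.integral_nonneg hT0 (fun u hu => hhnn u hu)
  intro n
  induction n with
  | zero =>
    intro s hs hd
    simp only [Nat.cast_zero, zero_mul] at hd
    have : s = t := by
      have := abs_nonneg (s - t); have h0 : |s - t| = 0 := le_antisymm hd this
      have := abs_eq_zero.1 h0; linarith
    subst this
    simp only [pow_zero, one_mul]
    linarith
  | succ n ih =>
    intro s hs hd
    have h4 : (1:ℝ) ≤ 4^n := one_le_pow₀ (by norm_num)
    rcases le_total t s with hst | hst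
    · set a := max t (s - δ) with hadef
      have hta : t ≤ a := le_max_left _ _
      have has : a ≤ s := max_le hst (by linarith)
      have haI : a ∈ Icc (0:ℝ) T := ⟨ht.1.trans hta, has.trans hs.2⟩
      have hsa : s - a ≤ δ := by
        have : s - δ ≤ a := le_max_right _ _
        linarith
      have hat : |a - t| ≤ n * δ := by
        rw [abs_of_nonneg (by linarith)]
        rcases le_total (s - δ) t with hc | hc
        · have : a = t := max_eq_left hc
          rw [this]; simp; positivity
        · have : a = s - δ := max_eq_right hc
          rw [this]
          have := abs_of_nonneg (show (0:ℝ) ≤ s - t by linarith) ▸ hd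
          push_cast at this ⊢
          linarith
      have iha := ih a haI hat
      have step := (gronwall_step haI.1 has hs.2 hf hf'c hLint hLnn hhint hhnn hbound
        (hsmall a s haI.1 has hs.2 hsa) s ⟨has, le_rfl⟩).1
      rw [← hHdef] at step
      calc ‖f s‖ ≤ 2 * ‖f a‖ + 2 * H := step
        _ ≤ 2 * (4^n * (‖f t‖ + H)) + 2 * H := by linarith
        _ ≤ 4^(n+1) * (‖f t‖ + H) := by
            have h1 : H ≤ 4^n * (‖f t‖ + H) := by nlinarith [norm_nonneg (f t)]
            rw [pow_succ]
            nlinarith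
    · set b := min t (s + δ) with hbdef
      have hbt : b ≤ t := min_le_left _ _
      have hsb : s ≤ b := le_min hst (by linarith)
      have hbI : b ∈ Icc (0:ℝ) T := ⟨hs.1.trans hsb, hbt.trans ht.2⟩
      have hbs : b - s ≤ δ := by
        have : b ≤ s + δ := min_le_right _ _
        linarith
      have hbt' : |b - t| ≤ n * δ := by
        rw [abs_of_nonpos (by linarith), neg_sub]
        rcases le_total t (s + δ) with hc | hc
        · have : b = t := min_eq_left hc
          rw [this]; simp; positivity
        · have : b = s + δ := min_eq_right hc
          rw [this]
          have := abs_of_nonpos (show s - t ≤ (0:ℝ) by linarith) ▸ hd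
          push_cast at this ⊢
          linarith
      have ihb := ih b hbI hbt'
      have step := (gronwall_step hs.1 hsb hbI.2 hf hf'c hLint hLnn hhint hhnn hbound
        (hsmall s b hs.1 hsb hbI.2 hbs) s ⟨le_rfl, hsb⟩).2
      rw [← hHdef] at step
      calc ‖f s‖ ≤ 2 * ‖f b‖ + 2 * H := step
        _ ≤ 2 * (4^n * (‖f t‖ + H)) + 2 * H := by linarith
        _ ≤ 4^(n+1) * (‖f t‖ + H) := by
            have h1 : H ≤ 4^n * (‖f t‖ + H) := by nlinarith [norm_nonneg (f t)]
            rw [pow_succ]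
            nlinarith

end Gronwall

section MeasAux

/-- The sup over `x` of a jointly continuous bounded family is a.e. measurable on `[0,T]`. -/
lemma aemeasurable_sup_of_continuousOn {T M : ℝ} {F : ℝ → V3 → ℝ}
    (hc : ContinuousOn (fun p : ℝ × V3 => F p.1 p.2) (Icc (0:ℝ) T ×ˢ (univ : Set V3)))
    (hM : ∀ τ ∈ Icc (0:ℝ) T, ∀ x, F τ x ≤ M) :
    AEMeasurable (fun τ => ⨆ x : V3, F τ x) (volume.restrict (Icc (0:ℝ) T)) := by
  obtain ⟨e, he⟩ := TopologicalSpace.exists_dense_seq V3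
  have hcomp : ∀ x : V3, ContinuousOn (fun τ => F τ x) (Icc (0:ℝ) T) := by
    intro x
    have : ContinuousOn (fun τ : ℝ => ((τ, x) : ℝ × V3)) (Icc (0:ℝ) T) :=
      (continuous_id.prodMk continuous_const).continuousOn
    exact hc.comp this (fun τ hτ => ⟨hτ, mem_univ _⟩)
  have hmeasn : ∀ n : ℕ, AEMeasurable (fun τ => F τ (e n)) (volume.restrict (Icc (0:ℝ) T)) :=
    fun n => (hcomp (e n)).aemeasurable measurableSet_Icc
  have hg : AEMeasurable (fun τ => ⨆ n : ℕ, F τ (e n)) (volume.restrict (Icc (0:ℝ) T)) :=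
    AEMeasurable.iSup hmeasn
  apply hg.congr
  rw [Filter.EventuallyEq, ae_restrict_iff' measurableSet_Icc]
  filter_upwards with τ hτ
  have hbdd : BddAbove (range fun x : V3 => F τ x) := by
    refine ⟨M, ?_⟩; rintro _ ⟨x, rfl⟩; exact hM τ hτ x
  have hbddn : BddAbove (range fun n : ℕ => F τ (e n)) := by
    refine ⟨M, ?_⟩; rintro _ ⟨n, rfl⟩; exact hM τ hτ (e n)
  have hFcont : Continuous (fun x : V3 => F τ x) := by
    rw [← continuousOn_univ]
    have : ContinuousOn (fun x : V3 => ((τ, x) : ℝ × V3)) univ :=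
      (continuous_const.prodMk continuous_id).continuousOn
    exact hc.comp this (fun x _ => ⟨hτ, mem_univ _⟩)
  apply le_antisymm
  · exact ciSup_le fun n => le_ciSup hbdd (e n)
  · apply ciSup_le
    intro x
    obtain ⟨u, hu_mem, hu_lim⟩ := mem_closure_iff_seq_limit.1 (he.closure_range ▸ mem_univ x :
      x ∈ closure (range e))
    have hle : ∀ k, F τ (u k) ≤ ⨆ n : ℕ, F τ (e n) := by
      intro k
      obtain ⟨n, hn⟩ := hu_mem k
      rw [← hn]
      exact le_ciSup hbddn n
    exact le_of_tendsto ((hFcont.tendsto x).comp hu_lim) (Filter.Eventually.of_forall hle)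

/-- Bounded a.e.-measurable functions on `[0,T]` are interval integrable. -/
lemma intervalIntegrable_of_bdd {T M : ℝ} {g : ℝ → ℝ} (hT0 : 0 ≤ T)
    (hmeas : AEMeasurable g (volume.restrict (Icc (0:ℝ) T)))
    (hbd : ∀ τ ∈ Icc (0:ℝ) T, |g τ| ≤ M) :
    IntervalIntegrable g volume 0 T := by
  rw [intervalIntegrable_iff_integrableOn_Ioc_of_le hT0]
  apply MeasureTheory.Integrable.mono_measure _
    (Measure.restrict_mono Ioc_subset_Icc_self le_rfl)
  refine ⟨hmeas.aestronglyMeasurable, ?_⟩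
  apply HasFiniteIntegral.restrict_of_bounded (C := M) (by exact measure_Icc_lt_top)
  rw [ae_restrict_iff' measurableSet_Icc]
  filter_upwards with τ hτ
  simpa [Real.norm_eq_abs] using hbd τ hτ

lemma integral_le_eps_bound {T a b : ℝ} {g : ℝ → ℝ} (h0a : 0 ≤ a) (hab : a ≤ b) (hbT : b ≤ T)
    (hint : IntervalIntegrable g volume 0 T)
    (hint2 : IntervalIntegrable (fun τ => g τ ^ 2) volume 0 T)
    (hnn : ∀ τ ∈ Icc (0:ℝ) T, 0 ≤ g τ) {ε : ℝ} (hε : 0 < ε) :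
    ∫ τ in a..b, g τ ≤ (b - a) * ε / 2 + (∫ τ in (0:ℝ)..T, g τ ^ 2) / (2 * ε) := by
  have hT0 : (0:ℝ) ≤ T := h0a.trans (hab.trans hbT)
  have hsub : Icc a b ⊆ Icc 0 T := Icc_subset_Icc h0a hbT
  have hmset : uIcc a b ⊆ uIcc 0 T := by
    rw [uIcc_of_le hab, uIcc_of_le hT0]; exact hsub
  have hint' := hint.mono_set hmset
  have hint2' := hint2.mono_set hmset
  have hintc : IntervalIntegrable (fun τ => ε/2 + g τ^2/(2*ε)) volume a b :=
    (intervalIntegrable_const).add (hint2'.div_const (2*ε))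
  have step1 : ∫ τ in a..b, g τ ≤ ∫ τ in a..b, (ε/2 + g τ^2/(2*ε)) := by
    apply intervalIntegral.integral_mono_on hab hint' hintc
    intro τ hτ
    have h := hnn τ (hsub hτ)
    have key : 2*ε*(g τ) ≤ ε^2 + g τ^2 := by nlinarith [sq_nonneg (g τ - ε)]
    rw [div_add_div _ _ (by norm_num : (2:ℝ) ≠ 0) (by positivity : 2*ε ≠ 0),
      le_div_iff₀ (by positivity)]
    ring_nf
    nlinarith
  have step2 : ∫ τ in a..b, (ε/2 + g τ^2/(2*ε))
      = (b - a) * (ε/2) + (∫ τ in a..b, g τ^2)/(2*ε) := by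
    rw [intervalIntegral.integral_add intervalIntegrable_const (hint2'.div_const (2*ε)),
      intervalIntegral.integral_const, intervalIntegral.integral_div, smul_eq_mul]
  have step3 : (∫ τ in a..b, g τ^2) ≤ ∫ τ in (0:ℝ)..T, g τ^2 := by
    apply intervalIntegral.integral_mono_interval h0a hab hbT _ hint2
    filter_upwards with τ using sq_nonneg (g τ)
  calc ∫ τ in a..b, g τ ≤ _ := step1
    _ = (b - a) * (ε/2) + (∫ τ in a..b, g τ^2)/(2*ε) := step2
    _ ≤ (b - a) * (ε/2) + (∫ τ in (0:ℝ)..T, g τ^2)/(2*ε) := by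
        have : (0:ℝ) < 2*ε := by positivity
        gcongr
    _ = (b - a) * ε / 2 + (∫ τ in (0:ℝ)..T, g τ ^ 2) / (2 * ε) := by ring

/-- Continuity of the characteristics right-hand side along a continuous curve. -/
lemma contOn_charRHS {T : ℝ} {A B : ℝ → V3 → V3}
    (hAc : ContinuousOn (fun p : ℝ × V3 => A p.1 p.2) (Icc (0:ℝ) T ×ˢ (univ : Set V3)))
    (hBc : ContinuousOn (fun p : ℝ × V3 => B p.1 p.2) (Icc (0:ℝ) T ×ˢ (univ : Set V3)))
    {g : ℝ → Z6} (hg : ContinuousOn g (Icc (0:ℝ) T)) :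
    ContinuousOn (fun σ => charRHS A B σ (g σ)) (Icc (0:ℝ) T) := by
  have hX : ContinuousOn (fun σ => (g σ).1) (Icc (0:ℝ) T) :=
    continuous_fst.comp_continuousOn hg
  have hV : ContinuousOn (fun σ => (g σ).2) (Icc (0:ℝ) T) :=
    continuous_snd.comp_continuousOn hg
  have hpair : ContinuousOn (fun σ : ℝ => ((σ, (g σ).1) : ℝ × V3)) (Icc (0:ℝ) T) :=
    (continuousOn_id).prodMk hX
  have hAg : ContinuousOn (fun σ => A σ (g σ).1) (Icc (0:ℝ) T) :=
    hAc.comp hpair (fun σ hσ => ⟨hσ, mem_univ _⟩)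
  have hBg : ContinuousOn (fun σ => B σ (g σ).1) (Icc (0:ℝ) T) :=
    hBc.comp hpair (fun σ hσ => ⟨hσ, mem_univ _⟩)
  have hcross : ContinuousOn (fun σ => cross3 (g σ).2 (B σ (g σ).1)) (Icc (0:ℝ) T) :=
    continuous_cross3.comp_continuousOn (hV.prodMk hBg)
  exact hV.prodMk (hAg.add hcross)

end MeasAux

set_option maxHeartbeats 2000000 in
/-- Lipschitz dependence of the characteristic flow on the magnetic
field: `sup_{z ∈ B_ρ(0)} |Z(s,t,z) − Z̃(s,t,z)| ≤ C ‖B − B̃‖_{L²(0,T;L∞)}`. -/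
theorem characteristic_flow_lipschitz_in_B
    (T K ρ : ℝ) (hT : 0 < T) (hK : 0 < K) (hρ : 0 < ρ)
    (A : ℝ → V3 → V3) (hA : FamC1bV T A) :
    ∃ C > (0:ℝ), ∀ B B' : ℝ → V3 → V3,
      FamC1bV T B → FamC1bV T B' →
      fieldL2C1b T B ≤ K → fieldL2C1b T B' ≤ K →
      ∀ Z Z' : ℝ → ℝ → Z6 → Z6,
        IsCharFlow T A B Z → IsCharFlow T A B' Z' →
        ∀ s ∈ Icc (0:ℝ) T, ∀ t ∈ Icc (0:ℝ) T, ∀ z : Z6, enorm6 z ≤ ρ →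
          enorm6 (Z s t z - Z' s t z)
            ≤ C * fieldL2Linf T (fun τ x => B τ x - B' τ x) := by
  obtain ⟨hAc, hAd, hAdc, MA, hMA⟩ := hA
  have hT0 : (0:ℝ) ≤ T := hT.le
  have h0I : (0:ℝ) ∈ Icc (0:ℝ) T := ⟨le_rfl, hT0⟩
  have hMAnn : 0 ≤ MA := (enorm3_nonneg _).trans (hMA 0 h0I 0).1
  -- uniform constants
  set δ₀ : ℝ := min (1/4) ((1/(16*K))^2) with hδ₀def
  have hδ₀ : 0 < δ₀ := lt_min (by norm_num) (by positivity)
  set n₀ : ℕ := ⌈T / δ₀⌉₊ with hn₀def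
  have hTn₀ : T ≤ n₀ * δ₀ := by
    rw [← div_le_iff₀ hδ₀]
    exact Nat.le_ceil _
  set R : ℝ := 4^n₀ * (ρ + T * MA) with hRdef
  have hRpos : 0 < R := by positivity
  set δ₁ : ℝ := min (1/(4*(1+MA))) ((1/(4*(2+2*R)*K))^2) with hδ₁def
  have hδ₁ : 0 < δ₁ := lt_min (by positivity) (by positivity)
  set n₁ : ℕ := ⌈T / δ₁⌉₊ with hn₁def
  have hTn₁ : T ≤ n₁ * δ₁ := by
    rw [← div_le_iff₀ hδ₁]
    exact Nat.le_ceil _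
  have hδ₀a : δ₀ ≤ 1/4 := min_le_left _ _
  have hδ₀b : δ₀ ≤ (1/(16*K))^2 := min_le_right _ _
  have hδ₁a : δ₁ ≤ 1/(4*(1+MA)) := min_le_left _ _
  have hδ₁b : δ₁ ≤ (1/(4*(2+2*R)*K))^2 := min_le_right _ _
  have hReq : R = 4^n₀ * (ρ + T * MA) := rfl
  clear_value δ₀ δ₁
  clear hδ₀def hδ₁def
  clear_value R
  clear hRdef
  refine ⟨Real.sqrt 6 * 4^n₁ * (2*R) * Real.sqrt T, by positivity, ?_⟩
  intro B B' hB hB' hKB hKB' Z Z' hZ hZ' s hs t ht z hz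
  obtain ⟨hBc, hBd, hBdc, MB, hMB⟩ := hB
  obtain ⟨hB'c, hB'd, hB'dc, MB', hMB'⟩ := hB'
  set mB : ℝ → ℝ := fun τ => ⨆ x : V3, enorm3 (B τ x) with hmBdef
  set lB : ℝ → ℝ := fun τ => ⨆ x : V3, ‖fderiv ℝ (B τ) x‖ with hlBdef
  set mB' : ℝ → ℝ := fun τ => ⨆ x : V3, enorm3 (B' τ x) with hmB'def
  set lB' : ℝ → ℝ := fun τ => ⨆ x : V3, ‖fderiv ℝ (B' τ) x‖ with hlB'def
  set hd : ℝ → ℝ := fun τ => ⨆ x : V3, enorm3 (B τ x - B' τ x) with hhddef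
  -- generic sup facts
  have supfacts : ∀ (G : V3 → ℝ) (M' : ℝ), (∀ x, G x ≤ M') →
      (∀ x, G x ≤ ⨆ y, G y) ∧ (⨆ y, G y) ≤ M' := by
    intro G M' hGM
    have hbdd : BddAbove (range G) := ⟨M', by rintro _ ⟨y, rfl⟩; exact hGM y⟩
    exact ⟨fun x => le_ciSup hbdd x, ciSup_le hGM⟩
  -- pointwise facts about mB, lB, mB', hd
  have hmB_ub : ∀ τ ∈ Icc (0:ℝ) T, ∀ x, enorm3 (B τ x) ≤ mB τ :=
    fun τ hτ => (supfacts _ MB (fun x => (hMB τ hτ x).1)).1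
  have hmB_le : ∀ τ ∈ Icc (0:ℝ) T, mB τ ≤ MB :=
    fun τ hτ => (supfacts _ MB (fun x => (hMB τ hτ x).1)).2
  have hmB_nn : ∀ τ ∈ Icc (0:ℝ) T, 0 ≤ mB τ :=
    fun τ hτ => (enorm3_nonneg _).trans (hmB_ub τ hτ 0)
  have hlB_ub : ∀ τ ∈ Icc (0:ℝ) T, ∀ x, ‖fderiv ℝ (B τ) x‖ ≤ lB τ :=
    fun τ hτ => (supfacts _ MB (fun x => (hMB τ hτ x).2)).1
  have hlB_le : ∀ τ ∈ Icc (0:ℝ) T, lB τ ≤ MB :=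
    fun τ hτ => (supfacts _ MB (fun x => (hMB τ hτ x).2)).2
  have hlB_nn : ∀ τ ∈ Icc (0:ℝ) T, 0 ≤ lB τ :=
    fun τ hτ => (norm_nonneg _).trans (hlB_ub τ hτ 0)
  have hmB'_ub : ∀ τ ∈ Icc (0:ℝ) T, ∀ x, enorm3 (B' τ x) ≤ mB' τ :=
    fun τ hτ => (supfacts _ MB' (fun x => (hMB' τ hτ x).1)).1
  have hmB'_le : ∀ τ ∈ Icc (0:ℝ) T, mB' τ ≤ MB' :=
    fun τ hτ => (supfacts _ MB' (fun x => (hMB' τ hτ x).1)).2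
  have hmB'_nn : ∀ τ ∈ Icc (0:ℝ) T, 0 ≤ mB' τ :=
    fun τ hτ => (enorm3_nonneg _).trans (hmB'_ub τ hτ 0)
  have hlB'_ub : ∀ τ ∈ Icc (0:ℝ) T, ∀ x, ‖fderiv ℝ (B' τ) x‖ ≤ lB' τ :=
    fun τ hτ => (supfacts _ MB' (fun x => (hMB' τ hτ x).2)).1
  have hlB'_nn : ∀ τ ∈ Icc (0:ℝ) T, 0 ≤ lB' τ :=
    fun τ hτ => (norm_nonneg _).trans (hlB'_ub τ hτ 0)
  have hdiff_bd : ∀ τ ∈ Icc (0:ℝ) T, ∀ x : V3,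
      enorm3 (B τ x - B' τ x) ≤ Real.sqrt 3 * (MB + MB') := by
    intro τ hτ x
    calc enorm3 (B τ x - B' τ x) ≤ Real.sqrt 3 * ‖B τ x - B' τ x‖ := enorm3_le _
    _ ≤ Real.sqrt 3 * (MB + MB') := by
        have h1 : ‖B τ x - B' τ x‖ ≤ ‖B τ x‖ + ‖B' τ x‖ := norm_sub_le _ _
        have h2 : ‖B τ x‖ ≤ MB := (norm_le_enorm3 _).trans (hMB τ hτ x).1
        have h3 : ‖B' τ x‖ ≤ MB' := (norm_le_enorm3 _).trans (hMB' τ hτ x).1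
        nlinarith [Real.sqrt_nonneg 3]
  have hhd_ub : ∀ τ ∈ Icc (0:ℝ) T, ∀ x, enorm3 (B τ x - B' τ x) ≤ hd τ :=
    fun τ hτ => (supfacts _ _ (hdiff_bd τ hτ)).1
  have hhd_le : ∀ τ ∈ Icc (0:ℝ) T, hd τ ≤ Real.sqrt 3 * (MB + MB') :=
    fun τ hτ => (supfacts _ _ (hdiff_bd τ hτ)).2
  have hhd_nn : ∀ τ ∈ Icc (0:ℝ) T, 0 ≤ hd τ :=
    fun τ hτ => (enorm3_nonneg _).trans (hhd_ub τ hτ 0)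
  -- measurability
  have hmBmeas : AEMeasurable mB (volume.restrict (Icc (0:ℝ) T)) :=
    aemeasurable_sup_of_continuousOn (continuous_enorm3.comp_continuousOn hBc)
      (fun τ hτ x => (hMB τ hτ x).1)
  have hlBmeas : AEMeasurable lB (volume.restrict (Icc (0:ℝ) T)) :=
    aemeasurable_sup_of_continuousOn (continuous_norm.comp_continuousOn hBdc)
      (fun τ hτ x => (hMB τ hτ x).2)
  have hmB'meas : AEMeasurable mB' (volume.restrict (Icc (0:ℝ) T)) :=
    aemeasurable_sup_of_continuousOn (continuous_enorm3.comp_continuousOn hB'c)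
      (fun τ hτ x => (hMB' τ hτ x).1)
  have hhdmeas : AEMeasurable hd (volume.restrict (Icc (0:ℝ) T)) :=
    aemeasurable_sup_of_continuousOn (continuous_enorm3.comp_continuousOn (hBc.sub hB'c))
      hdiff_bd
  -- integrability
  have hmBint : IntervalIntegrable mB volume 0 T :=
    intervalIntegrable_of_bdd hT0 hmBmeas (fun τ hτ => by
      rw [abs_of_nonneg (hmB_nn τ hτ)]; exact hmB_le τ hτ)
  have hlBint : IntervalIntegrable lB volume 0 T :=
    intervalIntegrable_of_bdd hT0 hlBmeas (fun τ hτ => by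
      rw [abs_of_nonneg (hlB_nn τ hτ)]; exact hlB_le τ hτ)
  have hmB'int : IntervalIntegrable mB' volume 0 T :=
    intervalIntegrable_of_bdd hT0 hmB'meas (fun τ hτ => by
      rw [abs_of_nonneg (hmB'_nn τ hτ)]; exact hmB'_le τ hτ)
  have hhdint : IntervalIntegrable hd volume 0 T :=
    intervalIntegrable_of_bdd hT0 hhdmeas (fun τ hτ => by
      rw [abs_of_nonneg (hhd_nn τ hτ)]; exact hhd_le τ hτ)
  have hmB'sqint : IntervalIntegrable (fun τ => mB' τ ^ 2) volume 0 T := by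
    apply intervalIntegrable_of_bdd (M := MB'^2) hT0
    · simp only [sq]; exact hmB'meas.mul hmB'meas
    · intro τ hτ
      rw [abs_of_nonneg (sq_nonneg _)]
      exact pow_le_pow_left₀ (hmB'_nn τ hτ) (hmB'_le τ hτ) 2
  have hmlBint : IntervalIntegrable (fun τ => mB τ + lB τ) volume 0 T := hmBint.add hlBint
  have hmlBsqint : IntervalIntegrable (fun τ => (mB τ + lB τ) ^ 2) volume 0 T := by
    apply intervalIntegrable_of_bdd (M := (MB+MB)^2) hT0
    · simp only [sq]; exact (hmBmeas.add hlBmeas).mul (hmBmeas.add hlBmeas)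
    · intro τ hτ
      rw [abs_of_nonneg (sq_nonneg _)]
      apply pow_le_pow_left₀ (add_nonneg (hmB_nn τ hτ) (hlB_nn τ hτ))
      · exact add_le_add (hmB_le τ hτ) (hlB_le τ hτ)
  have hhdsqint : IntervalIntegrable (fun τ => hd τ ^ 2) volume 0 T := by
    apply intervalIntegrable_of_bdd (M := (Real.sqrt 3 * (MB + MB'))^2) hT0
    · simp only [sq]; exact hhdmeas.mul hhdmeas
    · intro τ hτ
      rw [abs_of_nonneg (sq_nonneg _)]
      exact pow_le_pow_left₀ (hhd_nn τ hτ) (hhd_le τ hτ) 2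
  -- L² budgets
  have hIKB : ∫ τ in (0:ℝ)..T, (mB τ + lB τ)^2 ≤ K^2 := by
    have h1 : (0:ℝ) ≤ ∫ τ in (0:ℝ)..T, (mB τ + lB τ)^2 :=
      intervalIntegral.integral_nonneg hT0 (fun u hu => sq_nonneg _)
    have h2 : Real.sqrt (∫ τ in (0:ℝ)..T, (mB τ + lB τ)^2) ≤ K := hKB
    calc (∫ τ in (0:ℝ)..T, (mB τ + lB τ)^2)
        = Real.sqrt (∫ τ in (0:ℝ)..T, (mB τ + lB τ)^2) ^ 2 := (Real.sq_sqrt h1).symm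
      _ ≤ K^2 := pow_le_pow_left₀ (Real.sqrt_nonneg _) h2 2
  have hIKB' : ∫ τ in (0:ℝ)..T, mB' τ ^2 ≤ K^2 := by
    have h0 : (0:ℝ) ≤ ∫ τ in (0:ℝ)..T, (mB' τ + lB' τ)^2 :=
      intervalIntegral.integral_nonneg hT0 (fun u hu => sq_nonneg _)
    have h2 : Real.sqrt (∫ τ in (0:ℝ)..T, (mB' τ + lB' τ)^2) ≤ K := hKB'
    have hmlB'sqint : IntervalIntegrable (fun τ => (mB' τ + lB' τ) ^ 2) volume 0 T := by
      apply intervalIntegrable_of_bdd (M := (MB'+MB')^2) hT0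
      · have hlB'meas : AEMeasurable lB' (volume.restrict (Icc (0:ℝ) T)) :=
          aemeasurable_sup_of_continuousOn (continuous_norm.comp_continuousOn hB'dc)
            (fun τ hτ x => (hMB' τ hτ x).2)
        simp only [sq]; exact (hmB'meas.add hlB'meas).mul (hmB'meas.add hlB'meas)
      · intro τ hτ
        rw [abs_of_nonneg (sq_nonneg _)]
        apply pow_le_pow_left₀ (add_nonneg (hmB'_nn τ hτ) (hlB'_nn τ hτ))
        · exact add_le_add (hmB'_le τ hτ)
            ((supfacts _ MB' (fun x => (hMB' τ hτ x).2)).2)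
    have hmono : ∫ τ in (0:ℝ)..T, mB' τ ^2 ≤ ∫ τ in (0:ℝ)..T, (mB' τ + lB' τ)^2 := by
      apply intervalIntegral.integral_mono_on hT0 hmB'sqint hmlB'sqint
      intro τ hτ
      have h1 := hmB'_nn τ hτ
      have h2 := hlB'_nn τ hτ
      nlinarith
    calc (∫ τ in (0:ℝ)..T, mB' τ ^2) ≤ ∫ τ in (0:ℝ)..T, (mB' τ + lB' τ)^2 := hmono
      _ = Real.sqrt (∫ τ in (0:ℝ)..T, (mB' τ + lB' τ)^2) ^ 2 := (Real.sq_sqrt h0).symm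
      _ ≤ K^2 := pow_le_pow_left₀ (Real.sqrt_nonneg _) h2 2
  -- small-budget estimate: ∫_a^b g ≤ √δ * K whenever ∫_0^T g² ≤ K² and b-a ≤ δ
  have heps : ∀ (g : ℝ → ℝ) (δ : ℝ), 0 < δ →
      IntervalIntegrable g volume 0 T →
      IntervalIntegrable (fun τ => g τ ^ 2) volume 0 T →
      (∀ τ ∈ Icc (0:ℝ) T, 0 ≤ g τ) →
      (∫ τ in (0:ℝ)..T, g τ ^ 2) ≤ K^2 →
      ∀ a b : ℝ, 0 ≤ a → a ≤ b → b ≤ T → b - a ≤ δ →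
      ∫ τ in a..b, g τ ≤ Real.sqrt δ * K := by
    intro g δ hδpos hgint hgsqint hgnn hgK a b h0a hab hbT hba
    set sδ := Real.sqrt δ with hsδdef
    have hsδ : 0 < sδ := Real.sqrt_pos.2 hδpos
    have hss : sδ * sδ = δ := Real.mul_self_sqrt hδpos.le
    have hε : (0:ℝ) < K / sδ := by positivity
    have hbd := integral_le_eps_bound h0a hab hbT hgint hgsqint hgnn hε
    have hInn : (0:ℝ) ≤ ∫ τ in (0:ℝ)..T, g τ ^2 :=
      intervalIntegral.integral_nonneg hT0 (fun u hu => sq_nonneg _)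
    have e1 : (b - a) * (K / sδ) / 2 ≤ sδ * K / 2 := by
      rw [div_le_div_iff_of_pos_right (by norm_num)]
      calc (b - a) * (K / sδ) ≤ δ * (K / sδ) := by
            apply mul_le_mul_of_nonneg_right hba hε.le
        _ = sδ * K := by rw [← hss]; field_simp
    have e2 : (∫ τ in (0:ℝ)..T, g τ ^2) / (2 * (K / sδ)) ≤ sδ * K / 2 := by
      have h2 : (0:ℝ) < 2 * (K / sδ) := by positivity
      rw [div_le_iff₀ h2]
      calc (∫ τ in (0:ℝ)..T, g τ ^2) ≤ K^2 := hgK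
        _ = sδ * K / 2 * (2 * (K / sδ)) := by field_simp
    linarith
  -- budgets for the two Gronwall applications
  have hsmall₀ : ∀ a b : ℝ, 0 ≤ a → a ≤ b → b ≤ T → b - a ≤ δ₀ →
      ∫ τ in a..b, (1 + 2 * mB' τ) ≤ 1/2 := by
    intro a b h0a hab hbT hba
    have hmB'K : (∫ τ in (0:ℝ)..T, mB' τ ^ 2) ≤ K^2 := hIKB'
    have h1 : ∫ τ in a..b, mB' τ ≤ Real.sqrt δ₀ * K :=
      heps mB' δ₀ hδ₀ hmB'int hmB'sqint hmB'_nn hmB'K a b h0a hab hbT hba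
    have hmB'int' : IntervalIntegrable mB' volume a b :=
      hmB'int.mono_set (by rw [uIcc_of_le hab, uIcc_of_le hT0]; exact Icc_subset_Icc h0a hbT)
    have heq : ∫ τ in a..b, (1 + 2 * mB' τ)
        = (b - a) + 2 * ∫ τ in a..b, mB' τ := by
      rw [intervalIntegral.integral_add intervalIntegrable_const (hmB'int'.const_mul 2),
        intervalIntegral.integral_const, intervalIntegral.integral_const_mul, smul_eq_mul,
        mul_one]
    have hsδ₀K : Real.sqrt δ₀ * K ≤ 1/16 := by
      have h2 : Real.sqrt δ₀ ≤ 1/(16*K) := by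
        have h3 : δ₀ ≤ (1/(16*K))^2 := hδ₀b
        calc Real.sqrt δ₀ ≤ Real.sqrt ((1/(16*K))^2) := Real.sqrt_le_sqrt h3
          _ = 1/(16*K) := Real.sqrt_sq (by positivity)
      calc Real.sqrt δ₀ * K ≤ (1/(16*K)) * K := by
            apply mul_le_mul_of_nonneg_right h2 hK.le
        _ = 1/16 := by field_simp
    have hδ₀le : δ₀ ≤ 1/4 := hδ₀a
    rw [heq]
    linarith
  have hsmall₁ : ∀ a b : ℝ, 0 ≤ a → a ≤ b → b ≤ T → b - a ≤ δ₁ →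
      ∫ τ in a..b, ((1 + MA) + (2 * mB τ + 2 * R * lB τ)) ≤ 1/2 := by
    intro a b h0a hab hbT hba
    have hmono_set : uIcc a b ⊆ uIcc 0 T := by
      rw [uIcc_of_le hab, uIcc_of_le hT0]; exact Icc_subset_Icc h0a hbT
    have hmlint' : IntervalIntegrable (fun τ => mB τ + lB τ) volume a b :=
      hmlBint.mono_set hmono_set
    have hmBint' : IntervalIntegrable mB volume a b := hmBint.mono_set hmono_set
    have hlBint' : IntervalIntegrable lB volume a b := hlBint.mono_set hmono_set
    have hstep : ∫ τ in a..b, ((1 + MA) + (2 * mB τ + 2 * R * lB τ))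
        ≤ ∫ τ in a..b, ((1 + MA) + (2 + 2*R) * (mB τ + lB τ)) := by
      apply intervalIntegral.integral_mono_on hab
      · exact intervalIntegrable_const.add ((hmBint'.const_mul 2).add (hlBint'.const_mul (2*R)))
      · exact intervalIntegrable_const.add (hmlint'.const_mul (2 + 2*R))
      · intro τ hτ
        have hτT : τ ∈ Icc (0:ℝ) T := Icc_subset_Icc h0a hbT hτ
        have h1 := hmB_nn τ hτT
        have h2 := hlB_nn τ hτT
        nlinarith [hRpos.le]
    have heq : ∫ τ in a..b, ((1 + MA) + (2 + 2*R) * (mB τ + lB τ))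
        = (b - a) * (1 + MA) + (2 + 2*R) * ∫ τ in a..b, (mB τ + lB τ) := by
      rw [intervalIntegral.integral_add intervalIntegrable_const (hmlint'.const_mul (2 + 2*R)),
        intervalIntegral.integral_const, intervalIntegral.integral_const_mul, smul_eq_mul]
    have h1 : ∫ τ in a..b, (mB τ + lB τ) ≤ Real.sqrt δ₁ * K :=
      heps _ δ₁ hδ₁ hmlBint hmlBsqint
        (fun τ hτ => add_nonneg (hmB_nn τ hτ) (hlB_nn τ hτ)) hIKB a b h0a hab hbT hba
    have hsδ₁K : (2 + 2*R) * (Real.sqrt δ₁ * K) ≤ 1/4 := by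
      have h2 : Real.sqrt δ₁ ≤ 1/(4*(2+2*R)*K) := by
        have h3 : δ₁ ≤ (1/(4*(2+2*R)*K))^2 := hδ₁b
        calc Real.sqrt δ₁ ≤ Real.sqrt ((1/(4*(2+2*R)*K))^2) := Real.sqrt_le_sqrt h3
          _ = 1/(4*(2+2*R)*K) := Real.sqrt_sq (by positivity)
      calc (2 + 2*R) * (Real.sqrt δ₁ * K) ≤ (2 + 2*R) * ((1/(4*(2+2*R)*K)) * K) := by
            apply mul_le_mul_of_nonneg_left _ (by positivity)
            apply mul_le_mul_of_nonneg_right h2 hK.le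
        _ = 1/4 := by field_simp
    have hbam : (b - a) * (1 + MA) ≤ 1/4 := by
      have h3 : δ₁ ≤ 1/(4*(1+MA)) := hδ₁a
      calc (b - a) * (1 + MA) ≤ δ₁ * (1 + MA) := by
            apply mul_le_mul_of_nonneg_right hba (by linarith)
        _ ≤ (1/(4*(1+MA))) * (1 + MA) := by
            apply mul_le_mul_of_nonneg_right h3 (by linarith)
        _ = 1/4 := by field_simp
    calc ∫ τ in a..b, ((1 + MA) + (2 * mB τ + 2 * R * lB τ)) ≤ _ := hstep
      _ = (b - a) * (1 + MA) + (2 + 2*R) * ∫ τ in a..b, (mB τ + lB τ) := heq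
      _ ≤ (b - a) * (1 + MA) + (2 + 2*R) * (Real.sqrt δ₁ * K) := by
          apply add_le_add_right
          apply mul_le_mul_of_nonneg_left h1 (by positivity)
      _ ≤ 1/2 := by linarith
  -- continuity of the trajectories
  have hZc : ContinuousOn (fun σ => Z σ t z) (Icc (0:ℝ) T) :=
    fun σ hσ => (((hZ t ht z).2) σ hσ).continuousWithinAt
  have hZ'c : ContinuousOn (fun σ => Z' σ t z) (Icc (0:ℝ) T) :=
    fun σ hσ => (((hZ' t ht z).2) σ hσ).continuousWithinAt
  have hzρ : ‖z‖ ≤ ρ := (norm_le_enorm6 z).trans hz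
  have habsT : ∀ σ ∈ Icc (0:ℝ) T, |σ - t| ≤ T := by
    intro σ hσ
    rw [abs_le]
    constructor <;> [linarith [hσ.1, ht.2]; linarith [hσ.2, ht.1]]
  -- a priori bound for Z'
  have hapriori : ∀ σ ∈ Icc (0:ℝ) T, ‖Z' σ t z‖ ≤ R := by
    have hL₀int : IntervalIntegrable (fun τ => 1 + 2 * mB' τ) volume 0 T :=
      intervalIntegrable_const.add (hmB'int.const_mul 2)
    have hL₀nn : ∀ τ ∈ Icc (0:ℝ) T, (0:ℝ) ≤ 1 + 2 * mB' τ := by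
      intro τ hτ; have := hmB'_nn τ hτ; linarith
    have hh₀int : IntervalIntegrable (fun _ : ℝ => MA) volume 0 T := intervalIntegrable_const
    have hh₀nn : ∀ τ ∈ Icc (0:ℝ) T, (0:ℝ) ≤ MA := fun τ hτ => hMAnn
    have hbound₀ : ∀ σ ∈ Icc (0:ℝ) T,
        ‖charRHS A B' σ (Z' σ t z)‖ ≤ (1 + 2 * mB' σ) * ‖Z' σ t z‖ + MA := by
      intro σ hσ
      set w := Z' σ t z with hwdef
      have h1 : ‖w.2‖ ≤ ‖w‖ := norm_snd_le w
      have h2 : ‖A σ w.1‖ ≤ MA := (norm_le_enorm3 _).trans (hMA σ hσ w.1).1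
      have h3 : ‖B' σ w.1‖ ≤ mB' σ := (norm_le_enorm3 _).trans (hmB'_ub σ hσ w.1)
      have h4 : ‖cross3 w.2 (B' σ w.1)‖ ≤ 2 * ‖w‖ * mB' σ := by
        calc ‖cross3 w.2 (B' σ w.1)‖ ≤ 2 * ‖w.2‖ * ‖B' σ w.1‖ := cross3_norm_le _ _
          _ ≤ 2 * ‖w‖ * mB' σ := by
              have := hmB'_nn σ hσ
              nlinarith [norm_nonneg w.2, norm_nonneg (B' σ w.1)]
      have hch : charRHS A B' σ w = (w.2, A σ w.1 + cross3 w.2 (B' σ w.1)) := rfl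
      rw [hch, Prod.norm_def]
      apply max_le
      · have := hmB'_nn σ hσ
        simp only
        nlinarith [norm_nonneg w]
      · simp only
        calc ‖A σ w.1 + cross3 w.2 (B' σ w.1)‖
            ≤ ‖A σ w.1‖ + ‖cross3 w.2 (B' σ w.1)‖ := norm_add_le _ _
          _ ≤ MA + 2 * ‖w‖ * mB' σ := by linarith
          _ ≤ (1 + 2 * mB' σ) * ‖w‖ + MA := by
              have := hmB'_nn σ hσ
              nlinarith [norm_nonneg w]
    have hchain := gronwall_chain (E := Z6) hδ₀
      (f := fun σ => Z' σ t z) (f' := fun σ => charRHS A B' σ (Z' σ t z))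
      (L := fun τ => 1 + 2 * mB' τ) (h := fun _ => MA)
      ((hZ' t ht z).2) (contOn_charRHS hAc hB'c hZ'c)
      hL₀int hL₀nn hh₀int hh₀nn hbound₀ hsmall₀ ht n₀
    intro σ hσ
    have hd₀ : |σ - t| ≤ (n₀ : ℝ) * δ₀ := (habsT σ hσ).trans hTn₀
    have := hchain σ hσ hd₀
    have hZ't : Z' t t z = z := (hZ' t ht z).1
    rw [hZ't] at this
    have hMAint : ∫ τ in (0:ℝ)..T, (fun _ : ℝ => MA) τ = T * MA := by
      rw [intervalIntegral.integral_const, smul_eq_mul, sub_zero]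
    rw [hMAint] at this
    calc ‖Z' σ t z‖ ≤ 4^n₀ * (‖z‖ + T * MA) := this
      _ ≤ 4^n₀ * (ρ + T * MA) := by
          apply mul_le_mul_of_nonneg_left _ (by positivity)
          linarith
      _ = R := hReq.symm
  -- main difference estimate
  set D : ℝ → V3 → V3 := fun τ x => B τ x - B' τ x with hDdef
  set S : ℝ := fieldL2Linf T D with hSdef
  have hSsq : S = Real.sqrt (∫ τ in (0:ℝ)..T, hd τ ^ 2) := rfl
  have hSnn : 0 ≤ S := by rw [hSsq]; exact Real.sqrt_nonneg _
  have hIhd_nn : (0:ℝ) ≤ ∫ τ in (0:ℝ)..T, hd τ ^ 2 :=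
    intervalIntegral.integral_nonneg hT0 (fun u hu => sq_nonneg _)
  have hS2 : S^2 = ∫ τ in (0:ℝ)..T, hd τ ^ 2 := by
    rw [hSsq]; exact Real.sq_sqrt hIhd_nn
  -- ∫ hd ≤ √T * S
  have hinthd : ∫ τ in (0:ℝ)..T, hd τ ≤ Real.sqrt T * S := by
    rcases eq_or_lt_of_le hSnn with hS0 | hS0
    · -- S = 0
      apply le_of_forall_pos_le_add
      intro c hc
      have hε : (0:ℝ) < 2*c/T := by positivity
      have := integral_le_eps_bound le_rfl hT0 le_rfl hhdint hhdsqint hhd_nn hε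
      rw [← hS2, ← hS0] at this
      simp only [ne_eq, sub_zero] at this
      calc ∫ τ in (0:ℝ)..T, hd τ ≤ T * (2*c/T) / 2 + 0^2 / (2*(2*c/T)) := this
        _ = c := by field_simp; ring
        _ ≤ Real.sqrt T * S + c := by
            rw [← hS0]
            nlinarith [Real.sqrt_nonneg T]
    · -- S > 0
      have hε : (0:ℝ) < S / Real.sqrt T := by positivity
      have hbd := integral_le_eps_bound le_rfl hT0 le_rfl hhdint hhdsqint hhd_nn hε
      rw [← hS2] at hbd
      have hsT : Real.sqrt T * Real.sqrt T = T := Real.mul_self_sqrt hT0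
      have hsTpos : 0 < Real.sqrt T := Real.sqrt_pos.2 hT
      calc ∫ τ in (0:ℝ)..T, hd τ
          ≤ (T - 0) * (S / Real.sqrt T) / 2 + S^2 / (2 * (S / Real.sqrt T)) := hbd
        _ = Real.sqrt T * S := by
            rw [sub_zero]
            have hkey : T / Real.sqrt T = Real.sqrt T := by
              rw [div_eq_iff hsTpos.ne']; exact hsT.symm
            rw [show T * (S / Real.sqrt T) / 2 = T / Real.sqrt T * S / 2 from by ring, hkey]
            rw [show S^2 / (2 * (S / Real.sqrt T)) = Real.sqrt T * S / 2 by
              rw [sq]; field_simp]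
            ring
  -- Gronwall for the difference
  have hL₁int : IntervalIntegrable (fun τ => (1 + MA) + (2 * mB τ + 2 * R * lB τ)) volume 0 T :=
    intervalIntegrable_const.add ((hmBint.const_mul 2).add (hlBint.const_mul (2*R)))
  have hL₁nn : ∀ τ ∈ Icc (0:ℝ) T, (0:ℝ) ≤ (1 + MA) + (2 * mB τ + 2 * R * lB τ) := by
    intro τ hτ
    have h1 := hmB_nn τ hτ
    have h2 := hlB_nn τ hτ
    nlinarith [hRpos.le]
  have hh₁int : IntervalIntegrable (fun τ => 2 * R * hd τ) volume 0 T := hhdint.const_mul (2*R)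
  have hh₁nn : ∀ τ ∈ Icc (0:ℝ) T, (0:ℝ) ≤ 2 * R * hd τ := by
    intro τ hτ
    have := hhd_nn τ hτ
    nlinarith [hRpos.le]
  have hfderiv : ∀ σ ∈ Icc (0:ℝ) T, HasDerivWithinAt (fun σ => Z σ t z - Z' σ t z)
      (charRHS A B σ (Z σ t z) - charRHS A B' σ (Z' σ t z)) (Icc (0:ℝ) T) σ :=
    fun σ hσ => (((hZ t ht z).2) σ hσ).sub (((hZ' t ht z).2) σ hσ)
  have hf'c : ContinuousOn
      (fun σ => charRHS A B σ (Z σ t z) - charRHS A B' σ (Z' σ t z)) (Icc (0:ℝ) T) :=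
    (contOn_charRHS hAc hBc hZc).sub (contOn_charRHS hAc hB'c hZ'c)
  have hbound₁ : ∀ σ ∈ Icc (0:ℝ) T,
      ‖charRHS A B σ (Z σ t z) - charRHS A B' σ (Z' σ t z)‖
        ≤ ((1 + MA) + (2 * mB σ + 2 * R * lB σ)) * ‖Z σ t z - Z' σ t z‖ + 2 * R * hd σ := by
    intro σ hσ
    set w := Z σ t z with hwdef
    set w' := Z' σ t z with hw'def
    have hdiff : charRHS A B σ w - charRHS A B' σ w'
        = (w.2 - w'.2, (A σ w.1 + cross3 w.2 (B σ w.1))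
            - (A σ w'.1 + cross3 w'.2 (B' σ w'.1))) := rfl
    have hfst : ‖w.1 - w'.1‖ ≤ ‖w - w'‖ := norm_fst_le (w - w')
    have hsnd : ‖w.2 - w'.2‖ ≤ ‖w - w'‖ := norm_snd_le (w - w')
    have hnn : (0:ℝ) ≤ ‖w - w'‖ := norm_nonneg _
    have hmBσ := hmB_nn σ hσ
    have hlBσ := hlB_nn σ hσ
    have hhdσ := hhd_nn σ hσ
    -- mean value for A
    have hTA : ‖A σ w.1 - A σ w'.1‖ ≤ MA * ‖w.1 - w'.1‖ := by
      have := Convex.norm_image_sub_le_of_norm_fderiv_le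
        (f := A σ) (C := MA) (s := (univ : Set V3))
        (fun x _ => ((hAd σ hσ).differentiable one_ne_zero).differentiableAt)
        (fun x _ => (hMA σ hσ x).2) convex_univ (mem_univ w'.1) (mem_univ w.1)
      simpa using this
    -- mean value for B σ
    have hTB : ‖B σ w.1 - B σ w'.1‖ ≤ lB σ * ‖w.1 - w'.1‖ := by
      have := Convex.norm_image_sub_le_of_norm_fderiv_le
        (f := B σ) (C := lB σ) (s := (univ : Set V3))
        (fun x _ => ((hBd σ hσ).differentiable one_ne_zero).differentiableAt)
        (fun x _ => hlB_ub σ hσ x) convex_univ (mem_univ w'.1) (mem_univ w.1)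
      simpa using this
    -- cross decomposition
    have hcross : cross3 w.2 (B σ w.1) - cross3 w'.2 (B' σ w'.1)
        = cross3 (w.2 - w'.2) (B σ w.1) + cross3 w'.2 (B σ w.1 - B σ w'.1)
          + cross3 w'.2 (B σ w'.1 - B' σ w'.1) :=
      cross3_decomp w.2 w'.2 (B σ w.1) (B σ w'.1) (B' σ w'.1)
    have hw'R : ‖w'‖ ≤ R := hapriori σ hσ
    have hw'2R : ‖w'.2‖ ≤ R := (norm_snd_le w').trans hw'R
    have hc1 : ‖cross3 (w.2 - w'.2) (B σ w.1)‖ ≤ 2 * mB σ * ‖w - w'‖ := by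
      calc ‖cross3 (w.2 - w'.2) (B σ w.1)‖
          ≤ 2 * ‖w.2 - w'.2‖ * ‖B σ w.1‖ := cross3_norm_le _ _
        _ ≤ 2 * mB σ * ‖w - w'‖ := by
            have h3 : ‖B σ w.1‖ ≤ mB σ := (norm_le_enorm3 _).trans (hmB_ub σ hσ w.1)
            nlinarith [norm_nonneg (w.2 - w'.2), norm_nonneg (B σ w.1)]
    have hc2 : ‖cross3 w'.2 (B σ w.1 - B σ w'.1)‖ ≤ 2 * R * (lB σ * ‖w - w'‖) := by
      calc ‖cross3 w'.2 (B σ w.1 - B σ w'.1)‖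
          ≤ 2 * ‖w'.2‖ * ‖B σ w.1 - B σ w'.1‖ := cross3_norm_le _ _
        _ ≤ 2 * R * (lB σ * ‖w - w'‖) := by
            have h5 : ‖B σ w.1 - B σ w'.1‖ ≤ lB σ * ‖w - w'‖ := by
              calc ‖B σ w.1 - B σ w'.1‖ ≤ lB σ * ‖w.1 - w'.1‖ := hTB
                _ ≤ lB σ * ‖w - w'‖ := by nlinarith
            nlinarith [norm_nonneg w'.2, norm_nonneg (B σ w.1 - B σ w'.1),
              mul_nonneg hlBσ hnn]
    have hc3 : ‖cross3 w'.2 (B σ w'.1 - B' σ w'.1)‖ ≤ 2 * R * hd σ := by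
      calc ‖cross3 w'.2 (B σ w'.1 - B' σ w'.1)‖
          ≤ 2 * ‖w'.2‖ * ‖B σ w'.1 - B' σ w'.1‖ := cross3_norm_le _ _
        _ ≤ 2 * R * hd σ := by
            have h6 : ‖B σ w'.1 - B' σ w'.1‖ ≤ hd σ :=
              (norm_le_enorm3 _).trans (hhd_ub σ hσ w'.1)
            nlinarith [norm_nonneg w'.2, norm_nonneg (B σ w'.1 - B' σ w'.1)]
    rw [hdiff, Prod.norm_def]
    apply max_le
    · simp only
      calc ‖(w - w').2‖ ≤ ‖w - w'‖ := norm_snd_le _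
        _ ≤ ((1 + MA) + (2 * mB σ + 2 * R * lB σ)) * ‖w - w'‖ + 2 * R * hd σ := by
            nlinarith [hRpos.le, mul_nonneg (mul_nonneg (by norm_num : (0:ℝ) ≤ 2) hRpos.le) hhdσ,
              mul_nonneg hmBσ hnn, mul_nonneg (mul_nonneg hRpos.le hlBσ) hnn,
              mul_nonneg hMAnn hnn]
    · simp only
      have hre : A σ w.1 + cross3 w.2 (B σ w.1) - (A σ w'.1 + cross3 w'.2 (B' σ w'.1))
          = (A σ w.1 - A σ w'.1) + (cross3 w.2 (B σ w.1) - cross3 w'.2 (B' σ w'.1)) := by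
        abel
      rw [hre, hcross]
      calc ‖(A σ w.1 - A σ w'.1) + (cross3 (w.2 - w'.2) (B σ w.1)
            + cross3 w'.2 (B σ w.1 - B σ w'.1) + cross3 w'.2 (B σ w'.1 - B' σ w'.1))‖
          ≤ ‖A σ w.1 - A σ w'.1‖ + ‖cross3 (w.2 - w'.2) (B σ w.1)
            + cross3 w'.2 (B σ w.1 - B σ w'.1) + cross3 w'.2 (B σ w'.1 - B' σ w'.1)‖ :=
            norm_add_le _ _
        _ ≤ ‖A σ w.1 - A σ w'.1‖ + ‖cross3 (w.2 - w'.2) (B σ w.1)‖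
            + ‖cross3 w'.2 (B σ w.1 - B σ w'.1)‖ + ‖cross3 w'.2 (B σ w'.1 - B' σ w'.1)‖ := by
            have := norm_add₃_le (a := cross3 (w.2 - w'.2) (B σ w.1))
              (b := cross3 w'.2 (B σ w.1 - B σ w'.1))
              (c := cross3 w'.2 (B σ w'.1 - B' σ w'.1))
            linarith
        _ ≤ ((1 + MA) + (2 * mB σ + 2 * R * lB σ)) * ‖w - w'‖ + 2 * R * hd σ := by
            have hTA' : ‖A σ w.1 - A σ w'.1‖ ≤ MA * ‖w - w'‖ := by
              calc ‖A σ w.1 - A σ w'.1‖ ≤ MA * ‖w.1 - w'.1‖ := hTA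
                _ ≤ MA * ‖w - w'‖ := by nlinarith
            nlinarith
  have hchain := gronwall_chain (E := Z6) hδ₁
    (f := fun σ => Z σ t z - Z' σ t z)
    (f' := fun σ => charRHS A B σ (Z σ t z) - charRHS A B' σ (Z' σ t z))
    (L := fun τ => (1 + MA) + (2 * mB τ + 2 * R * lB τ)) (h := fun τ => 2 * R * hd τ)
    hfderiv hf'c hL₁int hL₁nn hh₁int hh₁nn hbound₁ hsmall₁ ht n₁
  have hd₁ : |s - t| ≤ (n₁ : ℝ) * δ₁ := (habsT s hs).trans hTn₁
  have hmain := hchain s hs hd₁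
  have hft : Z t t z - Z' t t z = 0 := by
    rw [(hZ t ht z).1, (hZ' t ht z).1, sub_self]
  rw [hft] at hmain
  simp only [norm_zero, zero_add] at hmain
  have hIeq : ∫ τ in (0:ℝ)..T, 2 * R * hd τ = 2 * R * ∫ τ in (0:ℝ)..T, hd τ :=
    intervalIntegral.integral_const_mul _ _
  rw [hIeq] at hmain
  calc enorm6 (Z s t z - Z' s t z)
      ≤ Real.sqrt 6 * ‖Z s t z - Z' s t z‖ := enorm6_le _
    _ ≤ Real.sqrt 6 * (4^n₁ * (2 * R * ∫ τ in (0:ℝ)..T, hd τ)) := by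
        apply mul_le_mul_of_nonneg_left hmain (Real.sqrt_nonneg 6)
    _ ≤ Real.sqrt 6 * (4^n₁ * (2 * R * (Real.sqrt T * S))) := by
        apply mul_le_mul_of_nonneg_left _ (Real.sqrt_nonneg 6)
        apply mul_le_mul_of_nonneg_left _ (by positivity)
        apply mul_le_mul_of_nonneg_left hinthd (by positivity)
    _ = Real.sqrt 6 * 4^n₁ * (2*R) * Real.sqrt T * S := by ring

end
end

section
/- Let X be a real normed vector space, let K ⊆ X be a convex set contained in an open set U ⊆ X, let B̄ ∈ K, and let J : U → ℝ be twice continuously Fréchet differentiable. Let ε > 0, C ≥ 0, γ > 0 and 0 < α < 2 + γ. Assume: (i) J'(B̄)[B − B̄] ≥ 0 for all B ∈ K; (ii) J''(B̄)[B − B̄, B − B̄] ≥ ε ‖B − B̄‖^α for all B ∈ K; (iii) ‖J''(B̄ + θ(B − B̄)) − J''(B̄)‖ ≤ C ‖θ(B − B̄)‖^γ for all B ∈ K and θ ∈ [0,1], where ‖·‖ on second derivatives is the operator norm of bilinear forms. Then there exists δ > 0 such that for all B ∈ K with ‖B − B̄‖ < δ one has J(B) ≥ J(B̄) + (ε/4)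 ‖B − B̄‖^α; in particular B̄ is a strict local minimizer of J on K. -/
open MeasureTheory Set
open scoped Classical

noncomputable section

set_option maxHeartbeats 1000000 in
/-- abstract second-order sufficient optimality condition with
quadratic-type growth `J(B) ≥ J(B̄) + (ε/4)‖B − B̄‖^α`. -/
theorem second_order_sufficient_condition
    {X : Type*} [NormedAddCommGroup X] [NormedSpace ℝ X]
    (U : Set X) (hU : IsOpen U) (K : Set X) (hK : Convex ℝ K) (hKU : K ⊆ U)
    (Bbar : X) (hBbar : Bbar ∈ K)
    (J : X → ℝ) (J' : X → X →L[ℝ] ℝ) (J'' : X → X →L[ℝ] X →L[ℝ] ℝ)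
    (hJ' : ∀ x ∈ U, HasFDerivAt J (J' x) x)
    (hJ'' : ∀ x ∈ U, HasFDerivAt J' (J'' x) x)
    (hJ''cont : ContinuousOn J'' U)
    (ε C γ α : ℝ) (hε : 0 < ε) (hC : 0 ≤ C) (hγ : 0 < γ)
    (hα : 0 < α) (hα' : α < 2 + γ)
    (h1 : ∀ B ∈ K, 0 ≤ J' Bbar (B - Bbar))
    (h2 : ∀ B ∈ K, ε * ‖B - Bbar‖ ^ α ≤ J'' Bbar (B - Bbar) (B - Bbar))
    (h3 : ∀ B ∈ K, ∀ θ ∈ Icc (0:ℝ) 1,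
      ‖J'' (Bbar + θ • (B - Bbar)) - J'' Bbar‖ ≤ C * ‖θ • (B - Bbar)‖ ^ γ) :
    ∃ δ > (0:ℝ), ∀ B ∈ K, ‖B - Bbar‖ < δ →
      J Bbar + ε / 4 * ‖B - Bbar‖ ^ α ≤ J B := by
  set q : ℝ := 2 + γ - α with hq_def
  have hq : 0 < q := by simp only [hq_def]; linarith
  set v : ℝ := (ε / (4 * (C + 1))) ^ (1 / q) with hv_def
  have hv : 0 < v := Real.rpow_pos_of_pos (by positivity) _
  refine ⟨min 1 v, lt_min one_pos hv, ?_⟩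
  intro B hB hlt
  set h : X := B - Bbar with hh_def
  -- the curve
  set c : ℝ → X := fun t => Bbar + t • h with hc_def
  have hc0 : c 0 = Bbar := by simp [hc_def]
  have hc1 : c 1 = B := by simp [hc_def, hh_def]
  have hcK : ∀ t ∈ Icc (0:ℝ) 1, c t ∈ K := by
    intro t ht
    have := hK hBbar hB (by linarith [ht.2] : (0:ℝ) ≤ 1 - t) ht.1 (by ring)
    convert this using 1
    simp only [hc_def, hh_def]
    module
  have hcU : ∀ t ∈ Icc (0:ℝ) 1, c t ∈ U := fun t ht => hKU (hcK t ht)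
  have hcd : ∀ t : ℝ, HasDerivAt c h t := by
    intro t
    have : HasDerivAt (fun t : ℝ => t • h) h t := by
      simpa using (hasDerivAt_id t).smul_const h
    simpa [hc_def] using this.const_add Bbar
  -- first derivative of g := J ∘ c
  have hg1 : ∀ t ∈ Icc (0:ℝ) 1,
      HasDerivWithinAt (fun t => J (c t)) (J' (c t) h) (Icc (0:ℝ) 1) t := by
    intro t ht
    exact (hJ' _ (hcU t ht)).comp_hasDerivWithinAt t ((hcd t).hasDerivWithinAt)
  -- derivative of t ↦ J' (c t) h
  have hg2 : ∀ t ∈ Icc (0:ℝ) 1,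
      HasDerivWithinAt (fun t => J' (c t) h) (J'' (c t) h h) (Icc (0:ℝ) 1) t := by
    intro t ht
    have hev : HasFDerivAt (fun L : X →L[ℝ] ℝ => L h)
        (ContinuousLinearMap.apply ℝ ℝ h) (J' (c t)) :=
      (ContinuousLinearMap.apply ℝ ℝ h).hasFDerivAt
    have := (hev.comp _ (hJ'' _ (hcU t ht))).comp_hasDerivWithinAt t
      ((hcd t).hasDerivWithinAt (s := Icc (0:ℝ) 1))
    exact this
  set d0 : ℝ := J' Bbar h with hd0_def
  set ea : ℝ := ε * ‖h‖ ^ α with hea_def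
  set Cq : ℝ := C * ‖h‖ ^ γ * ‖h‖ ^ (2:ℝ) with hCq_def
  have hea0 : 0 ≤ ea := by positivity
  have hCq0 : 0 ≤ Cq := by positivity
  set k : ℝ := Cq / ((1 + γ) * (2 + γ)) with hk_def
  have hk0 : 0 ≤ k := by positivity
  -- lower bound on second derivative along the segment
  have hsec : ∀ t ∈ Icc (0:ℝ) 1, ea - Cq * t ^ γ ≤ J'' (c t) h h := by
    intro t ht
    have hnn : |(J'' (c t) - J'' Bbar) h h| ≤ (C * ‖t • h‖ ^ γ) * (‖h‖ * ‖h‖) := by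
      calc |(J'' (c t) - J'' Bbar) h h| ≤ ‖J'' (c t) - J'' Bbar‖ * ‖h‖ * ‖h‖ :=
            (J'' (c t) - J'' Bbar).le_opNorm₂ h h
        _ ≤ (C * ‖t • h‖ ^ γ) * ‖h‖ * ‖h‖ := by
            have := h3 B hB t ht
            have h' : ‖J'' (c t) - J'' Bbar‖ ≤ C * ‖t • h‖ ^ γ := by
              simpa [hc_def, hh_def] using this
            gcongr
        _ = (C * ‖t • h‖ ^ γ) * (‖h‖ * ‖h‖) := by ring
    have hsmul : ‖t • h‖ ^ γ = t ^ γ * ‖h‖ ^ γ := by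
      rw [norm_smul, Real.norm_eq_abs, abs_of_nonneg ht.1,
        Real.mul_rpow ht.1 (norm_nonneg h)]
    have hsq : ‖h‖ * ‖h‖ = ‖h‖ ^ (2:ℝ) := by
      rw [show ((2:ℝ)) = ((2:ℕ) : ℝ) by norm_num, Real.rpow_natCast]; ring
    have hb : |(J'' (c t) - J'' Bbar) h h| ≤ Cq * t ^ γ := by
      calc |(J'' (c t) - J'' Bbar) h h| ≤ (C * ‖t • h‖ ^ γ) * (‖h‖ * ‖h‖) := hnn
        _ = Cq * t ^ γ := by rw [hsmul, hsq, hCq_def]; ring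
    have hsub : (J'' (c t) - J'' Bbar) h h = J'' (c t) h h - J'' Bbar h h := by
      simp
    have h2' := h2 B hB
    have := abs_le.1 hb
    have : -(Cq * t ^ γ) ≤ J'' (c t) h h - J'' Bbar h h := by
      rw [← hsub]; exact this.1
    simp only [hea_def, ← hh_def] at h2' ⊢
    linarith
  -- φ' and φ
  set p1 : ℝ → ℝ := fun t => J' (c t) h - d0 - ea * t + k * ((2 + γ) * t ^ (1 + γ))
    with hp1_def
  set p0 : ℝ → ℝ := fun t =>
      J (c t) - J (c 0) - d0 * t - ea / 2 * t ^ (2:ℕ) + k * t ^ (2 + γ) with hp0_def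
  -- derivative of φ' within Icc
  have hp1d : ∀ t ∈ Icc (0:ℝ) 1,
      HasDerivWithinAt p1 (J'' (c t) h h - ea + k * ((2 + γ) * ((1 + γ) * t ^ γ)))
        (Icc (0:ℝ) 1) t := by
    intro t ht
    have hr : HasDerivAt (fun t : ℝ => t ^ (1 + γ)) ((1 + γ) * t ^ γ) t := by
      have := Real.hasDerivAt_rpow_const (x := t) (p := 1 + γ) (Or.inr (by linarith))
      simpa [add_sub_cancel_left] using this
    have := ((hg2 t ht).sub_const d0).sub ((hasDerivWithinAt_id t _).const_mul ea)
    have := this.add (((hr.hasDerivWithinAt.const_mul (2 + γ)).const_mul k))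
    have e : p1 = ((fun x => J' (c x) h - d0) - fun y => ea * id y)
        + fun y => k * ((2 + γ) * y ^ (1 + γ)) := by
      ext s; simp only [hp1_def, Pi.add_apply, Pi.sub_apply, id]
    rw [e]
    exact this.congr_deriv (by ring)
  -- derivative of φ within Icc
  have hp0d : ∀ t ∈ Icc (0:ℝ) 1,
      HasDerivWithinAt p0 (p1 t) (Icc (0:ℝ) 1) t := by
    intro t ht
    have hr : HasDerivAt (fun t : ℝ => t ^ (2 + γ)) ((2 + γ) * t ^ (1 + γ)) t := by
      have := Real.hasDerivAt_rpow_const (x := t) (p := 2 + γ) (Or.inr (by linarith))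
      have e : 2 + γ - 1 = 1 + γ := by ring
      rwa [e] at this
    have h2' : HasDerivWithinAt (fun t : ℝ => ea / 2 * t ^ (2:ℕ))
        (ea / 2 * (2 * t ^ (1:ℕ))) (Icc (0:ℝ) 1) t := by
      exact ((hasDerivAt_pow 2 t).const_mul (ea / 2)).hasDerivWithinAt
    have hlin : HasDerivWithinAt (fun t : ℝ => d0 * t) (d0 * 1) (Icc (0:ℝ) 1) t :=
      ((hasDerivAt_id' t).const_mul d0).hasDerivWithinAt
    have hD := ((((hg1 t ht).sub_const (J (c 0))).sub hlin).sub h2').add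
      ((hr.hasDerivWithinAt (s := Icc (0:ℝ) 1)).const_mul k)
    have e2 : J' (c t) h - d0 * 1 - ea / 2 * (2 * t ^ (1:ℕ)) + k * ((2 + γ) * t ^ (1 + γ))
        = p1 t := by simp [hp1_def]; ring
    exact e2 ▸ hD
  -- φ'' ≥ 0 on the interior ⇒ φ' monotone
  have hint : interior (Icc (0:ℝ) 1) = Ioo (0:ℝ) 1 := interior_Icc
  have hne12 : ((1 + γ) * (2 + γ) : ℝ) ≠ 0 := by positivity
  have hkCq : k * ((2 + γ) * (1 + γ)) = Cq := by
    rw [show ((2 + γ) * (1 + γ) : ℝ) = (1 + γ) * (2 + γ) from mul_comm _ _, hk_def]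
    exact div_mul_cancel₀ _ hne12
  have hp1mono : MonotoneOn p1 (Icc (0:ℝ) 1) := by
    apply monotoneOn_of_hasDerivWithinAt_nonneg (convex_Icc 0 1)
      (f' := fun t => J'' (c t) h h - ea + k * ((2 + γ) * ((1 + γ) * t ^ γ)))
    · exact fun t ht => (hp1d t ht).continuousWithinAt
    · intro t ht
      rw [hint] at ht ⊢
      exact (hp1d t (Ioo_subset_Icc_self ht)).mono Ioo_subset_Icc_self
    · intro t ht
      rw [hint] at ht
      have hs := hsec t (Ioo_subset_Icc_self ht)
      have : k * ((2 + γ) * ((1 + γ) * t ^ γ)) = Cq * t ^ γ := by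
        rw [← hkCq]; ring
      rw [this]; linarith
  have hz1 : (0:ℝ) ^ (1 + γ) = 0 := Real.zero_rpow (by positivity)
  have hz2 : (0:ℝ) ^ (2 + γ) = 0 := Real.zero_rpow (by positivity)
  have hp10 : p1 0 = 0 := by
    simp [hp1_def, hc0, hd0_def, hz1]
  have hp1nn : ∀ t ∈ Icc (0:ℝ) 1, 0 ≤ p1 t := by
    intro t ht
    have := hp1mono (left_mem_Icc.2 one_pos.le) ht ht.1
    rwa [hp10] at this
  -- φ monotone ⇒ φ 1 ≥ φ 0 = 0
  have hp0mono : MonotoneOn p0 (Icc (0:ℝ) 1) := by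
    apply monotoneOn_of_hasDerivWithinAt_nonneg (convex_Icc 0 1) (f' := p1)
    · exact fun t ht => (hp0d t ht).continuousWithinAt
    · intro t ht
      rw [hint] at ht ⊢
      exact (hp0d t (Ioo_subset_Icc_self ht)).mono Ioo_subset_Icc_self
    · intro t ht
      rw [hint] at ht
      exact hp1nn t (Ioo_subset_Icc_self ht)
  have hp00 : p0 0 = 0 := by
    simp [hp0_def, hz2]
  have hp01 : 0 ≤ p0 1 := by
    have := hp0mono (left_mem_Icc.2 one_pos.le) (right_mem_Icc.2 one_pos.le) one_pos.le
    rwa [hp00] at this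
  have key : J (c 0) + d0 + ea / 2 - k ≤ J (c 1) := by
    have he : p0 1 = J (c 1) - J (c 0) - d0 - ea / 2 + k := by
      simp [hp0_def, Real.one_rpow]
    rw [he] at hp01
    linarith
  -- bound Cq by (ε/4)‖h‖^α
  have hhq : ‖h‖ ^ q ≤ ε / (4 * (C + 1)) := by
    have h1' : ‖h‖ ≤ v := le_of_lt (lt_of_lt_of_le hlt (min_le_right _ _))
    have : ‖h‖ ^ q ≤ v ^ q := Real.rpow_le_rpow (norm_nonneg _) h1' hq.le
    calc ‖h‖ ^ q ≤ v ^ q := this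
      _ = ε / (4 * (C + 1)) := by
          rw [hv_def, ← Real.rpow_mul (by positivity), one_div_mul_cancel hq.ne',
            Real.rpow_one]
  have hCqle : Cq ≤ ε / 4 * ‖h‖ ^ α := by
    have hsplit : ‖h‖ ^ γ * ‖h‖ ^ (2:ℝ) = ‖h‖ ^ α * ‖h‖ ^ q := by
      rw [← Real.rpow_add' (norm_nonneg _) (by positivity),
        ← Real.rpow_add' (norm_nonneg _) (by simp [hq_def]; linarith)]
      congr 1; simp [hq_def]; ring
    have hha : (0:ℝ) ≤ ‖h‖ ^ α := Real.rpow_nonneg (norm_nonneg _) _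
    have hhq0 : (0:ℝ) ≤ ‖h‖ ^ q := Real.rpow_nonneg (norm_nonneg _) _
    calc Cq = C * (‖h‖ ^ α * ‖h‖ ^ q) := by rw [hCq_def, mul_assoc, hsplit]
      _ ≤ (C + 1) * (‖h‖ ^ α * (ε / (4 * (C + 1)))) := by
          have : ‖h‖ ^ α * ‖h‖ ^ q ≤ ‖h‖ ^ α * (ε / (4 * (C + 1))) := by
            gcongr
          nlinarith [mul_nonneg hha hhq0]
      _ = ε / 4 * ‖h‖ ^ α := by
          have hne : (C:ℝ) + 1 ≠ 0 := by positivity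
          field_simp
  have hkle : k ≤ Cq := by
    rw [hk_def]
    apply div_le_self hCq0
    nlinarith
  have hd0nn : 0 ≤ d0 := by simpa [hd0_def, hh_def] using h1 B hB
  rw [hc0, hc1] at key
  have hea' : ea = ε * ‖h‖ ^ α := hea_def
  nlinarith [key, hd0nn, hkle, hCqle, hea']

end
end

section
/- Let r > 0, M > 0, λ > 0. Let f, g, f̃, g̃ ∈ C¹(ℝ³×ℝ³) have supports contained in B_r(0) and C¹-norms at most M. Define B(x) = −(1/(4πλ)) ∫_{ℝ³}∫_{ℝ³} |x−y|^{−1} ( w × ∂_v f(y,w) ) g(y,w) dw dy and B̃(x) analogously from f̃, g̃. Then there exists a constant C > 0 depending only on r and M such that sup_{x∈ℝ³} |B(x) − B̃(x)| ≤ (C/λ) ( ‖f − f̃‖_∞ + ‖g − g̃‖_∞ ). -/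
open MeasureTheory Set
open scoped Classical

noncomputable section

namespace FFL

lemma enorm3_nonneg (v : V3) : 0 ≤ enorm3 v := Real.sqrt_nonneg _

lemma abs_le_enorm3 (v : V3) (i : Fin 3) : |v i| ≤ enorm3 v := by
  rw [← Real.sqrt_sq_eq_abs]
  exact Real.sqrt_le_sqrt (Finset.single_le_sum (fun j _ => sq_nonneg (v j)) (Finset.mem_univ i))

lemma norm_le_enorm3 (v : V3) : ‖v‖ ≤ enorm3 v := by
  refine (pi_norm_le_iff_of_nonneg (enorm3_nonneg v)).2 fun i => ?_
  simpa [Real.norm_eq_abs] using abs_le_enorm3 v i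

lemma enorm3_le_sqrt3_norm (v : V3) : enorm3 v ≤ Real.sqrt 3 * ‖v‖ := by
  have h : ∑ i, (v i) ^ 2 ≤ 3 * ‖v‖ ^ 2 := by
    have : ∀ i ∈ (Finset.univ : Finset (Fin 3)), (v i) ^ 2 ≤ ‖v‖ ^ 2 := by
      intro i _
      have h1 : |v i| ≤ ‖v‖ := by simpa [Real.norm_eq_abs] using norm_le_pi_norm v i
      calc (v i) ^ 2 = |v i| ^ 2 := by rw [sq_abs]
        _ ≤ ‖v‖ ^ 2 := by gcongr
    calc ∑ i, (v i) ^ 2 ≤ ∑ _i : Fin 3, ‖v‖ ^ 2 := Finset.sum_le_sum this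
      _ = 3 * ‖v‖ ^ 2 := by norm_num [Finset.sum_const]
  calc enorm3 v ≤ Real.sqrt (3 * ‖v‖ ^ 2) := Real.sqrt_le_sqrt h
    _ = Real.sqrt 3 * ‖v‖ := by
        rw [Real.sqrt_mul (by norm_num), Real.sqrt_sq (norm_nonneg v)]

lemma enorm3_fst_le (z : Z6) : enorm3 z.1 ≤ enorm6 z := by
  rw [show enorm3 z.1 = Real.sqrt (enorm3 z.1 ^ 2) from (Real.sqrt_sq (enorm3_nonneg _)).symm]
  exact Real.sqrt_le_sqrt (by nlinarith [sq_nonneg (enorm3 z.2)])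

lemma enorm3_snd_le (z : Z6) : enorm3 z.2 ≤ enorm6 z := by
  rw [show enorm3 z.2 = Real.sqrt (enorm3 z.2 ^ 2) from (Real.sqrt_sq (enorm3_nonneg _)).symm]
  exact Real.sqrt_le_sqrt (by nlinarith [sq_nonneg (enorm3 z.1)])

lemma continuous_enorm3 : Continuous enorm3 := by
  apply Real.continuous_sqrt.comp
  exact continuous_finset_sum _ (fun i _ => (continuous_apply i).pow 2)

lemma continuous_enorm6 : Continuous enorm6 :=
  Real.continuous_sqrt.comp
    (((continuous_enorm3.comp continuous_fst).pow 2).add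
      ((continuous_enorm3.comp continuous_snd).pow 2))

lemma fin3cases {P : Fin 3 → Prop} (h0 : P 0) (h1 : P 1) (h2 : P 2) : ∀ i, P i := by
  intro i
  fin_cases i
  exacts [h0, h1, h2]

-- cross3 component values
lemma cross3_c0 (a b : V3) : cross3 a b 0 = a 1 * b 2 - a 2 * b 1 := rfl
lemma cross3_c1 (a b : V3) : cross3 a b 1 = a 2 * b 0 - a 0 * b 2 := rfl
lemma cross3_c2 (a b : V3) : cross3 a b 2 = a 0 * b 1 - a 1 * b 0 := rfl

lemma cross3_zero_right (a : V3) : cross3 a 0 = 0 := by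
  funext i
  refine fin3cases (P := fun i => cross3 a 0 i = (0:V3) i) ?_ ?_ ?_ i <;>
    simp [cross3_c0, cross3_c1, cross3_c2]

lemma cross3_sub_right (a u v : V3) : cross3 a (u - v) = cross3 a u - cross3 a v := by
  funext i
  refine fin3cases (P := fun i => cross3 a (u - v) i = (cross3 a u - cross3 a v) i) ?_ ?_ ?_ i <;>
    simp only [cross3_c0, cross3_c1, cross3_c2, Pi.sub_apply] <;> ring

lemma cross3_norm_le {A B : ℝ} (a b : V3) (hA : 0 ≤ A) (hB : 0 ≤ B)
    (ha : ∀ i, |a i| ≤ A) (hb : ∀ i, |b i| ≤ B) : ‖cross3 a b‖ ≤ 2 * (A * B) := by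
  refine (pi_norm_le_iff_of_nonneg (by positivity)).2 fun i => ?_
  have key : ∀ j k : Fin 3, |a j * b k - a k * b j| ≤ 2 * (A * B) := by
    intro j k
    have h1 : |a j * b k - a k * b j| ≤ |a j * b k| + |a k * b j| := by
      simpa [sub_eq_add_neg, abs_neg] using abs_add_le (a j * b k) (-(a k * b j))
    have h2 : |a j| * |b k| ≤ A * B := by
      have := abs_nonneg (a j); have := abs_nonneg (b k)
      exact mul_le_mul (ha j) (hb k) (abs_nonneg _) hA
    have h3 : |a k| * |b j| ≤ A * B := by
      exact mul_le_mul (ha k) (hb j) (abs_nonneg _) hA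
    calc |a j * b k - a k * b j| ≤ |a j * b k| + |a k * b j| := h1
      _ = |a j| * |b k| + |a k| * |b j| := by rw [abs_mul, abs_mul]
      _ ≤ A * B + A * B := add_le_add h2 h3
      _ = 2 * (A * B) := by ring
  refine fin3cases (P := fun i => ‖cross3 a b i‖ ≤ 2 * (A * B)) ?_ ?_ ?_ i <;>
    simpa only [Real.norm_eq_abs, cross3_c0, cross3_c1, cross3_c2] using key _ _

lemma continuous_cross3 {α : Type*} [TopologicalSpace α] {f g : α → V3}
    (hf : Continuous f) (hg : Continuous g) : Continuous fun x => cross3 (f x) (g x) := by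
  apply continuous_pi
  refine fin3cases ?_ ?_ ?_ <;>
    · simp only [cross3_c0, cross3_c1, cross3_c2]
      exact (((continuous_apply _).comp hf).mul ((continuous_apply _).comp hg)).sub
        (((continuous_apply _).comp hf).mul ((continuous_apply _).comp hg))


variable {a f f' : Z6 → ℝ}

lemma slice_contDiff (ha : ContDiff ℝ 1 a) (y : V3) : ContDiff ℝ 1 (fun w => a (y, w)) :=
  ha.comp (contDiff_const.prodMk contDiff_id)

lemma hasFDerivAt_slice (ha : ContDiff ℝ 1 a) (y w : V3) :
    HasFDerivAt (fun v => a (y, v))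
      ((fderiv ℝ a (y, w)).comp (((0 : V3 →L[ℝ] V3)).prod (ContinuousLinearMap.id ℝ V3))) w :=
  ((ha.differentiable one_ne_zero (y, w)).hasFDerivAt).comp w
    ((hasFDerivAt_const y w).prodMk (hasFDerivAt_id w))

lemma gradv_eq (ha : ContDiff ℝ 1 a) (z : Z6) (i : Fin 3) :
    gradv a z i = fderiv ℝ a z (0, Pi.single i 1) := by
  have h := hasFDerivAt_slice ha z.1 z.2
  show fderiv ℝ (fun v => a (z.1, v)) z.2 (Pi.single i 1) = _
  rw [h.fderiv]
  simp [ContinuousLinearMap.comp_apply, ContinuousLinearMap.prod_apply]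

lemma gradv_comp_le (ha : ContDiff ℝ 1 a) {M : ℝ} (hM : ∀ z, ‖fderiv ℝ a z‖ ≤ M)
    (z : Z6) (i : Fin 3) : |gradv a z i| ≤ M := by
  rw [gradv_eq ha]
  have h1 := (fderiv ℝ a z).le_opNorm (((0 : V3), Pi.single i (1:ℝ)) : Z6)
  have h2 : ‖(((0 : V3), Pi.single i (1:ℝ)) : Z6)‖ = 1 := by
    rw [Prod.norm_def, norm_zero, Pi.norm_single]
    norm_num
  rw [h2, mul_one] at h1
  exact le_trans (le_of_eq (Real.norm_eq_abs _).symm) (h1.trans (hM z))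

lemma gradv_zero_of {r : ℝ} (ha : ContDiff ℝ 1 a) (hs : SuppBall0 r a) {z : Z6}
    (hz : r < enorm6 z) : gradv a z = 0 := by
  have hopen : IsOpen {z' : Z6 | r < enorm6 z'} := isOpen_lt continuous_const continuous_enorm6
  have heq : a =ᶠ[nhds z] (fun _ => (0:ℝ)) := by
    filter_upwards [hopen.mem_nhds hz] with z' hz' using hs z' hz'
  funext i
  rw [gradv_eq ha, heq.fderiv_eq, fderiv_fun_const]
  simp

lemma gradv_continuous (ha : ContDiff ℝ 1 a) : Continuous (gradv a) := by
  apply continuous_pi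
  intro i
  have : (fun z => gradv a z i) = fun z => fderiv ℝ a z (0, Pi.single i 1) :=
    funext fun z => gradv_eq ha z i
  rw [this]
  exact (ha.continuous_fderiv one_ne_zero).clm_apply continuous_const

lemma gradv_sub (hf : ContDiff ℝ 1 f) (hf' : ContDiff ℝ 1 f') (z : Z6) :
    gradv (fun z => f z - f' z) z = gradv f z - gradv f' z := by
  funext i
  have h1 := hasFDerivAt_slice hf z.1 z.2
  have h2 := hasFDerivAt_slice hf' z.1 z.2
  show fderiv ℝ (fun v => f (z.1, v) - f' (z.1, v)) z.2 (Pi.single i 1) = _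
  rw [fderiv_fun_sub h1.differentiableAt h2.differentiableAt]
  rfl


lemma norm_snd_le_enorm6 (y w : V3) : ‖w‖ ≤ enorm6 (y, w) :=
  (norm_le_enorm3 w).trans (enorm3_snd_le (y, w))

lemma norm_fst_le_enorm6 (y w : V3) : ‖y‖ ≤ enorm6 (y, w) :=
  (norm_le_enorm3 y).trans (enorm3_fst_le (y, w))

lemma slice_zero {r : ℝ} (hs : SuppBall0 r a) {y w : V3} (h : r < ‖w‖) : a (y, w) = 0 :=
  hs _ (lt_of_lt_of_le h (norm_snd_le_enorm6 y w))

lemma gradv_slice_zero {r : ℝ} (ha : ContDiff ℝ 1 a) (hs : SuppBall0 r a) {y w : V3}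
    (h : r < ‖w‖) : gradv a (y, w) = 0 :=
  gradv_zero_of ha hs (lt_of_lt_of_le h (norm_snd_le_enorm6 y w))

lemma integrable_of_ball_support {E : Type*} [NormedAddCommGroup E] {r : ℝ} {F : V3 → E}
    (hF : Continuous F) (h0 : ∀ w, r < ‖w‖ → F w = 0) : Integrable F :=
  hF.integrable_of_hasCompactSupport
    (HasCompactSupport.intro (isCompact_closedBall (0:V3) r) fun w hw =>
      h0 w (by simpa [Metric.mem_closedBall, dist_zero_right] using hw))

/-- The inner integral. -/
def Jv (A B : Z6 → ℝ) (y : V3) : V3 := ∫ w : V3, B (y, w) • cross3 w (gradv A (y, w))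

variable {A B : Z6 → ℝ} {r : ℝ}

lemma Jv_integrand_integrable (hA : ContDiff ℝ 1 A) (hAs : SuppBall0 r A)
    (hBc : Continuous B) (y : V3) :
    Integrable (fun w : V3 => B (y, w) • cross3 w (gradv A (y, w))) := by
  apply integrable_of_ball_support (r := r)
  · exact (hBc.comp (Continuous.prodMk_right y)).smul
      (continuous_cross3 continuous_id ((gradv_continuous hA).comp (Continuous.prodMk_right y)))
  · intro w hw
    rw [gradv_slice_zero hA hAs hw, cross3_zero_right, smul_zero]

lemma piece_integrable (hA : ContDiff ℝ 1 A) (hAs : SuppBall0 r A)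
    (hBc : Continuous B) (y : V3) (j k : Fin 3) :
    Integrable (fun w : V3 => B (y, w) * (w j * gradv A (y, w) k)) := by
  apply integrable_of_ball_support (r := r)
  · exact (hBc.comp (Continuous.prodMk_right y)).mul ((continuous_apply j).mul
      (((continuous_apply k).comp (gradv_continuous hA)).comp (Continuous.prodMk_right y)))
  · intro w hw
    rw [gradv_slice_zero hA hAs hw]
    simp

lemma ibp_piece (hA : ContDiff ℝ 1 A) (hB : ContDiff ℝ 1 B)
    (hAs : SuppBall0 r A) (hBs : SuppBall0 r B) (y : V3) {j k : Fin 3} (hjk : j ≠ k) :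
    ∫ w : V3, B (y, w) * (w j * gradv A (y, w) k)
      = - ∫ w : V3, A (y, w) * (w j * gradv B (y, w) k) := by
  classical
  set pj : V3 →L[ℝ] ℝ := ContinuousLinearMap.proj j with hpj
  have hφA : ContDiff ℝ 1 (fun w => A (y, w)) := slice_contDiff hA y
  have hφB : ContDiff ℝ 1 (fun w => B (y, w)) := slice_contDiff hB y
  set F : V3 → ℝ := fun w => B (y, w) * w j with hF
  have hFc : ContDiff ℝ 1 F := hφB.mul (pj.contDiff)
  have hgv : ∀ w : V3, fderiv ℝ (fun v => A (y, v)) w (Pi.single k 1) = gradv A (y, w) k :=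
    fun w => rfl
  have hgvB : ∀ w : V3, fderiv ℝ (fun v => B (y, v)) w (Pi.single k 1) = gradv B (y, w) k :=
    fun w => rfl
  have hsingle : (Pi.single k 1 : V3) j = 0 := Pi.single_eq_of_ne hjk 1
  have hdF : ∀ w : V3, fderiv ℝ F w (Pi.single k 1) = w j * gradv B (y, w) k := by
    intro w
    have hd1 : DifferentiableAt ℝ (fun w => B (y, w)) w :=
      (hφB.differentiable one_ne_zero) w
    have hd2 : DifferentiableAt ℝ (fun w : V3 => w j) w := pj.differentiableAt
    have : fderiv ℝ F w = B (y, w) • fderiv ℝ (fun w : V3 => w j) w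
        + (w j) • fderiv ℝ (fun w => B (y, w)) w := fderiv_fun_mul hd1 hd2
    rw [this]
    have hproj : fderiv ℝ (fun w : V3 => w j) w = pj := pj.fderiv
    simp only [ContinuousLinearMap.add_apply, ContinuousLinearMap.smul_apply, hproj]
    rw [show pj (Pi.single k 1) = (Pi.single k 1 : V3) j from rfl, hsingle, hgvB]
    simp [smul_eq_mul]
  have I1 : Integrable (fun w : V3 => fderiv ℝ F w (Pi.single k 1) * A (y, w)) := by
    apply integrable_of_ball_support (r := r)
    · apply Continuous.mul
      · exact ((hFc.continuous_fderiv one_ne_zero).clm_apply continuous_const)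
      · exact hA.continuous.comp (Continuous.prodMk_right y)
    · intro w hw
      rw [slice_zero hAs hw, mul_zero]
  have I2 : Integrable (fun w : V3 => F w * fderiv ℝ (fun v => A (y, v)) w (Pi.single k 1)) := by
    apply integrable_of_ball_support (r := r)
    · apply Continuous.mul
      · exact (hB.continuous.comp (Continuous.prodMk_right y)).mul (continuous_apply j)
      · exact (hφA.continuous_fderiv one_ne_zero).clm_apply continuous_const
    · intro w hw
      rw [hgv w, gradv_slice_zero hA hAs hw]
      simp
  have I3 : Integrable (fun w : V3 => F w * A (y, w)) := by
    apply integrable_of_ball_support (r := r)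
    · exact ((hB.continuous.comp (Continuous.prodMk_right y)).mul (continuous_apply j)).mul
        (hA.continuous.comp (Continuous.prodMk_right y))
    · intro w hw
      rw [slice_zero hAs hw, mul_zero]
  have key := integral_mul_fderiv_eq_neg_fderiv_mul_of_integrable (v := Pi.single k 1)
    I1 I2 I3 (fun x _ => hFc.differentiable one_ne_zero x) (fun x _ => hφA.differentiable one_ne_zero x)
  have e1 : (fun w : V3 => B (y, w) * (w j * gradv A (y, w) k))
      = fun w : V3 => F w * fderiv ℝ (fun v => A (y, v)) w (Pi.single k 1) := by
    funext w
    rw [hgv w, hF]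
    ring
  have e2 : (fun w : V3 => fderiv ℝ F w (Pi.single k 1) * A (y, w))
      = fun w : V3 => A (y, w) * (w j * gradv B (y, w) k) := by
    funext w
    rw [hdF w]
    ring
  rw [e1, key, ← e2]

lemma Jv_apply (hA : ContDiff ℝ 1 A) (hAs : SuppBall0 r A) (hBc : Continuous B)
    (y : V3) (i : Fin 3) :
    Jv A B y i = ∫ w : V3, B (y, w) * cross3 w (gradv A (y, w)) i := by
  have hint := Jv_integrand_integrable hA hAs hBc (r := r) y
  have := (ContinuousLinearMap.integral_comp_comm
    (ContinuousLinearMap.proj (R := ℝ) (φ := fun _ : Fin 3 => ℝ) i) hint).symm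
  simpa [Jv, smul_eq_mul] using this

lemma Jv_antisymm (hA : ContDiff ℝ 1 A) (hB : ContDiff ℝ 1 B)
    (hAs : SuppBall0 r A) (hBs : SuppBall0 r B) (y : V3) :
    Jv A B y = - Jv B A y := by
  funext i
  rw [Jv_apply hA hAs hB.continuous y i, Pi.neg_apply,
    Jv_apply hB hBs hA.continuous y i]
  have step : ∀ j k : Fin 3, j ≠ k → k ≠ j →
      (∫ w : V3, B (y, w) * (w j * gradv A (y, w) k - w k * gradv A (y, w) j))
        = - ∫ w : V3, A (y, w) * (w j * gradv B (y, w) k - w k * gradv B (y, w) j) := by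
    intro j k hjk hkj
    have hsplit1 : (fun w : V3 => B (y, w) * (w j * gradv A (y, w) k - w k * gradv A (y, w) j))
        = fun w : V3 => B (y, w) * (w j * gradv A (y, w) k)
          - B (y, w) * (w k * gradv A (y, w) j) := by
      funext w; ring
    have hsplit2 : (fun w : V3 => A (y, w) * (w j * gradv B (y, w) k - w k * gradv B (y, w) j))
        = fun w : V3 => A (y, w) * (w j * gradv B (y, w) k)
          - A (y, w) * (w k * gradv B (y, w) j) := by
      funext w; ring
    rw [hsplit1, hsplit2,
      integral_sub (piece_integrable hA hAs hB.continuous y j k)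
        (piece_integrable hA hAs hB.continuous y k j),
      integral_sub (piece_integrable hB hBs hA.continuous y j k)
        (piece_integrable hB hBs hA.continuous y k j),
      ibp_piece hA hB hAs hBs y hjk, ibp_piece hA hB hAs hBs y hkj]
    ring
  refine fin3cases (P := fun i =>
    (∫ w : V3, B (y, w) * cross3 w (gradv A (y, w)) i)
      = - ∫ w : V3, A (y, w) * cross3 w (gradv B (y, w)) i) ?_ ?_ ?_ i
  · simpa only [cross3_c0] using step 1 2 (by decide) (by decide)
  · simpa only [cross3_c1] using step 2 0 (by decide) (by decide)
  · simpa only [cross3_c2] using step 0 1 (by decide) (by decide)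


lemma Jv_norm_le (hr : 0 ≤ r) (hA : ContDiff ℝ 1 A) (hAs : SuppBall0 r A)
    {MA : ℝ} (hMA : 0 ≤ MA) (hAM : ∀ z, ‖fderiv ℝ A z‖ ≤ MA)
    (hBc : Continuous B) (hBs : SuppBall0 r B)
    {CB : ℝ} (hCB : 0 ≤ CB) (hB : ∀ z, |B z| ≤ CB) (y : V3) :
    ‖Jv A B y‖ ≤ (volume (Metric.closedBall (0:V3) r)).toReal * (CB * (2 * (r * MA))) := by
  have hint : Integrable ((Metric.closedBall (0:V3) r).indicator
      (fun _ => CB * (2 * (r * MA)))) :=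
    (integrableOn_const (isCompact_closedBall (0:V3) r).measure_lt_top.ne).integrable_indicator
      measurableSet_closedBall
  have hbd : ∀ w : V3, ‖B (y, w) • cross3 w (gradv A (y, w))‖
      ≤ (Metric.closedBall (0:V3) r).indicator (fun _ => CB * (2 * (r * MA))) w := by
    intro w
    by_cases hw : ‖w‖ ≤ r
    · have hmem : w ∈ Metric.closedBall (0:V3) r := by
        simpa [Metric.mem_closedBall, dist_zero_right] using hw
      rw [Set.indicator_of_mem hmem]
      rw [norm_smul, Real.norm_eq_abs]
      have h1 : ‖cross3 w (gradv A (y, w))‖ ≤ 2 * (r * MA) :=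
        cross3_norm_le w (gradv A (y, w)) hr hMA
          (fun i => le_trans (by simpa [Real.norm_eq_abs] using norm_le_pi_norm w i) hw)
          (fun i => gradv_comp_le hA hAM (y, w) i)
      calc |B (y, w)| * ‖cross3 w (gradv A (y, w))‖ ≤ CB * (2 * (r * MA)) :=
          mul_le_mul (hB _) h1 (norm_nonneg _) hCB
        _ = CB * (2 * (r * MA)) := rfl
    · push_neg at hw
      rw [slice_zero hBs hw, zero_smul, norm_zero]
      exact Set.indicator_nonneg (fun _ _ => by positivity) w
  calc ‖Jv A B y‖ ≤ ∫ w, (Metric.closedBall (0:V3) r).indicator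
        (fun _ => CB * (2 * (r * MA))) w :=
      norm_integral_le_of_norm_le hint (Filter.Eventually.of_forall hbd)
    _ = (volume (Metric.closedBall (0:V3) r)).toReal * (CB * (2 * (r * MA))) := by
        rw [integral_indicator_const _ measurableSet_closedBall, smul_eq_mul]; rfl


lemma Jv_eq_zero (hA : ContDiff ℝ 1 A) (hAs : SuppBall0 r A) {y : V3}
    (hy : r < ‖y‖) : Jv A B y = 0 := by
  have h0 : ∀ w : V3, B (y, w) • cross3 w (gradv A (y, w)) = 0 := by
    intro w
    have : gradv A (y, w) = 0 :=
      gradv_zero_of hA hAs (lt_of_lt_of_le hy (norm_fst_le_enorm6 y w))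
    rw [this, cross3_zero_right, smul_zero]
  unfold Jv
  rw [funext h0]
  simp

lemma Jv_sub_left {f f' : Z6 → ℝ} (hf : ContDiff ℝ 1 f) (hf' : ContDiff ℝ 1 f')
    (hfs : SuppBall0 r f) (hf's : SuppBall0 r f') (hBc : Continuous B) (y : V3) :
    Jv (fun z => f z - f' z) B y = Jv f B y - Jv f' B y := by
  unfold Jv
  rw [← integral_sub (Jv_integrand_integrable hf hfs hBc y)
    (Jv_integrand_integrable hf' hf's hBc y)]
  congr 1
  funext w
  rw [gradv_sub hf hf', cross3_sub_right, smul_sub]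

lemma Jv_sub_right {g g' : Z6 → ℝ} (hA : ContDiff ℝ 1 A) (hAs : SuppBall0 r A)
    (hgc : Continuous g) (hg'c : Continuous g') (y : V3) :
    Jv A (fun z => g z - g' z) y = Jv A g y - Jv A g' y := by
  unfold Jv
  rw [← integral_sub (Jv_integrand_integrable hA hAs hgc y)
    (Jv_integrand_integrable hA hAs hg'c y)]
  congr 1
  funext w
  rw [sub_smul]

/-! ### The one-dimensional singular majorant -/

def rho3 : ℝ := -(1/3)

lemma rho3_neg : rho3 < 0 := by norm_num [rho3]

lemma abs_rpow_le (s : ℝ) : |s| ^ rho3 ≤ 2 * s ^ rho3 := by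
  rcases lt_trichotomy s 0 with hs | hs | hs
  · have habs : (0:ℝ) < |s| := abs_pos.2 hs.ne
    have h1 : s ^ rho3 = Real.exp (Real.log s * rho3) * Real.cos (rho3 * Real.pi) :=
      Real.rpow_def_of_neg hs rho3
    have h2 : Real.cos (rho3 * Real.pi) = 1/2 := by
      rw [show rho3 * Real.pi = -(Real.pi/3) by rw [rho3]; ring, Real.cos_neg,
        Real.cos_pi_div_three]
    have h3 : |s| ^ rho3 = Real.exp (Real.log |s| * rho3) := Real.rpow_def_of_pos habs rho3
    rw [h1, h2, h3, Real.log_abs]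
    ring_nf
    exact le_refl _
  · subst hs
    rw [abs_zero, Real.zero_rpow (by norm_num [rho3])]
    norm_num
  · rw [abs_of_pos hs]
    nlinarith [Real.rpow_nonneg hs.le rho3]

lemma integrableOn_abs_rpow_sub (c a b : ℝ) :
    IntegrableOn (fun t => |t - c| ^ rho3) (Icc a b) := by
  rcases le_or_gt a b with hab | hab
  · rw [integrableOn_Icc_iff_integrableOn_Ioc]
    have base : IntervalIntegrable (fun s : ℝ => s ^ rho3) volume (a - c) (b - c) :=
      intervalIntegral.intervalIntegrable_rpow' (by norm_num [rho3])
    have base2 := base.comp_sub_right c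
    rw [sub_add_cancel, sub_add_cancel] at base2
    have base3 : IntegrableOn (fun t : ℝ => (t - c) ^ rho3) (Ioc a b) :=
      (intervalIntegrable_iff_integrableOn_Ioc_of_le hab).1 base2
    refine Integrable.mono' (base3.const_mul 2) ?_ ?_
    · exact (show Measurable fun t : ℝ => |t - c| ^ rho3 by measurability).aestronglyMeasurable
    · refine Filter.Eventually.of_forall fun t => ?_
      rw [Real.norm_eq_abs, abs_of_nonneg (Real.rpow_nonneg (abs_nonneg _) _)]
      exact abs_rpow_le (t - c)
  · rw [Set.Icc_eq_empty_of_lt hab]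
    exact integrableOn_empty

def psi1 (r c : ℝ) : ℝ → ℝ := Set.indicator (Icc (-r) r) (fun t => |c - t| ^ rho3)

lemma psi1_nonneg (r c t : ℝ) : 0 ≤ psi1 r c t :=
  Set.indicator_nonneg (fun _ _ => Real.rpow_nonneg (abs_nonneg _) _) t

lemma psi1_integrable (r c : ℝ) : Integrable (psi1 r c) := by
  have h : IntegrableOn (fun t => |c - t| ^ rho3) (Icc (-r) r) := by
    have := integrableOn_abs_rpow_sub c (-r) r
    refine this.congr_fun (fun t _ => ?_) measurableSet_Icc
    rw [abs_sub_comm]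
  exact h.integrable_indicator measurableSet_Icc

def W1 (r : ℝ) : ℝ → ℝ := Set.indicator (Icc (-(2*r)) (2*r)) (fun s => |s| ^ rho3)

lemma W1_nonneg (r s : ℝ) : 0 ≤ W1 r s :=
  Set.indicator_nonneg (fun _ _ => Real.rpow_nonneg (abs_nonneg _) _) s

lemma W1_integrable (r : ℝ) : Integrable (W1 r) := by
  have h : IntegrableOn (fun s : ℝ => |s| ^ rho3) (Icc (-(2*r)) (2*r)) := by
    have := integrableOn_abs_rpow_sub 0 (-(2*r)) (2*r)
    refine this.congr_fun (fun t _ => ?_) measurableSet_Icc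
    simp only [sub_zero]
  exact h.integrable_indicator measurableSet_Icc

def B1 (r : ℝ) : ℝ := (∫ s, W1 r s) + (2*r) ^ rho3 * (2*r)

lemma B1_pos {r : ℝ} (hr : 0 < r) : 0 < B1 r := by
  have h1 : 0 ≤ ∫ s, W1 r s := integral_nonneg (W1_nonneg r)
  have h2 : 0 < (2*r) ^ rho3 * (2*r) :=
    mul_pos (Real.rpow_pos_of_pos (by linarith) _) (by linarith)
  unfold B1; linarith

lemma psi1_integral_le {r : ℝ} (hr : 0 < r) (c : ℝ) : ∫ t, psi1 r c t ≤ B1 r := by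
  set G : ℝ → ℝ := fun t => W1 r (t - c) + Set.indicator (Icc (-r) r)
    (fun _ => (2*r) ^ rho3) t with hG
  have hGint : Integrable G := by
    apply Integrable.add
    · exact (W1_integrable r).comp_sub_right c
    · exact (integrableOn_const (by
        rw [Real.volume_Icc]; exact ENNReal.ofReal_ne_top)).integrable_indicator
        measurableSet_Icc
  have hle : ∀ t, psi1 r c t ≤ G t := by
    intro t
    by_cases ht : t ∈ Icc (-r) r
    · rw [hG]
      have h1 : psi1 r c t = |t - c| ^ rho3 := by
        rw [psi1, Set.indicator_of_mem ht, abs_sub_comm]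
      simp only []
      rw [h1, Set.indicator_of_mem ht]
      by_cases h2 : |t - c| ≤ 2*r
      · have hmem : t - c ∈ Icc (-(2*r)) (2*r) := by
          rw [Set.mem_Icc]; constructor <;> [linarith [abs_le.1 h2]; exact (abs_le.1 h2).2]
        rw [W1, Set.indicator_of_mem hmem]
        have : (0:ℝ) ≤ (2*r) ^ rho3 := Real.rpow_nonneg (by linarith) _
        linarith
      · push_neg at h2
        have h3 : |t - c| ^ rho3 ≤ (2*r) ^ rho3 :=
          Real.rpow_le_rpow_of_nonpos (by linarith) h2.le rho3_neg.le
        have h4 : 0 ≤ W1 r (t - c) := W1_nonneg r _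
        linarith
    · rw [psi1, Set.indicator_of_notMem ht]
      have h4 : 0 ≤ W1 r (t - c) := W1_nonneg r _
      have h5 : 0 ≤ Set.indicator (Icc (-r) r) (fun _ => (2*r) ^ rho3) t :=
        Set.indicator_nonneg (fun _ _ => Real.rpow_nonneg (by linarith) _) t
      rw [hG]
      exact add_nonneg h4 h5
  calc ∫ t, psi1 r c t ≤ ∫ t, G t := integral_mono (psi1_integrable r c) hGint hle
    _ = (∫ t, W1 r (t - c)) + ∫ t, Set.indicator (Icc (-r) r) (fun _ => (2*r) ^ rho3) t := by
        rw [hG]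
        exact integral_add ((W1_integrable r).comp_sub_right c)
          ((integrableOn_const (by
            rw [Real.volume_Icc]; exact ENNReal.ofReal_ne_top)).integrable_indicator
            measurableSet_Icc)
    _ = (∫ s, W1 r s) + (2*r) ^ rho3 * (2*r) := by
        rw [integral_sub_right_eq_self (W1 r) c,
          integral_indicator_const _ measurableSet_Icc, Real.volume_real_Icc, smul_eq_mul,
          max_eq_left (by linarith)]
        ring_nf
    _ = B1 r := rfl


lemma enorm3_inv_le_prod {r : ℝ} (hr : 0 < r) (x y : V3)
    (hxy : ∀ i, y i ≠ x i) (hy : ∀ i, |y i| ≤ r) :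
    (enorm3 (x - y))⁻¹ ≤ ∏ i, psi1 r (x i) (y i) := by
  have hne : ∀ i, 0 < |x i - y i| := fun i => abs_pos.2 (sub_ne_zero.2 fun h => hxy i h.symm)
  have hprodpos : 0 < ∏ i, |x i - y i| := Finset.prod_pos fun i _ => hne i
  have hcomp : ∀ i, |x i - y i| ≤ enorm3 (x - y) := fun i => abs_le_enorm3 (x - y) i
  have epos : 0 < enorm3 (x - y) := lt_of_lt_of_le (hne 0) (hcomp 0)
  have hle : ∏ i, |x i - y i| ≤ (enorm3 (x - y)) ^ (3:ℕ) := by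
    calc ∏ i, |x i - y i| ≤ ∏ _i : Fin 3, enorm3 (x - y) :=
        Finset.prod_le_prod (fun i _ => (abs_nonneg _)) (fun i _ => hcomp i)
      _ = (enorm3 (x - y)) ^ (3:ℕ) := by
          rw [Finset.prod_const]; norm_num
  have key : (enorm3 (x - y))⁻¹ = ((enorm3 (x - y)) ^ (3:ℕ)) ^ rho3 := by
    rw [← Real.rpow_natCast (enorm3 (x - y)) 3, ← Real.rpow_mul epos.le]
    norm_num [rho3]
    rw [Real.rpow_neg_one]
  calc (enorm3 (x - y))⁻¹ = ((enorm3 (x - y)) ^ (3:ℕ)) ^ rho3 := key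
    _ ≤ (∏ i, |x i - y i|) ^ rho3 :=
        Real.rpow_le_rpow_of_nonpos hprodpos hle rho3_neg.le
    _ = ∏ i, |x i - y i| ^ rho3 :=
        (Real.finset_prod_rpow _ _ (fun i _ => abs_nonneg _) _).symm
    _ = ∏ i, psi1 r (x i) (y i) := by
        refine Finset.prod_congr rfl fun i _ => ?_
        rw [psi1, Set.indicator_of_mem (by rw [Set.mem_Icc]; exact abs_le.1 (hy i)),
          show x i - (y i) = x i - y i from rfl]

lemma dom_ae {r : ℝ} (hr : 0 < r) (x : V3) (F : V3 → V3) {K : ℝ} (hK : 0 ≤ K)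
    (hFle : ∀ y, ‖F y‖ ≤ K) (hF0 : ∀ y : V3, r < ‖y‖ → F y = 0) :
    ∀ᵐ y : V3, ‖(enorm3 (x - y))⁻¹ • F y‖ ≤ K * ∏ i, psi1 r (x i) (y i) := by
  have hae : ∀ᵐ y : V3, ∀ i, y i ≠ x i := by
    rw [MeasureTheory.ae_all_iff]
    intro i
    rw [show (volume : Measure V3) = Measure.pi fun _ => volume from volume_pi]
    exact Measure.ae_eval_ne (fun _ : Fin 3 => (volume : Measure ℝ)) i (x i)
  filter_upwards [hae] with y hy
  by_cases hyr : ∀ i, |y i| ≤ r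
  · have h1 : ‖(enorm3 (x - y))⁻¹ • F y‖ = (enorm3 (x - y))⁻¹ * ‖F y‖ := by
      rw [norm_smul, Real.norm_eq_abs, abs_of_nonneg (inv_nonneg.2 (enorm3_nonneg _))]
    rw [h1]
    calc (enorm3 (x - y))⁻¹ * ‖F y‖ ≤ (enorm3 (x - y))⁻¹ * K :=
        mul_le_mul_of_nonneg_left (hFle y) (inv_nonneg.2 (enorm3_nonneg _))
      _ ≤ (∏ i, psi1 r (x i) (y i)) * K :=
        mul_le_mul_of_nonneg_right (enorm3_inv_le_prod hr x y hy hyr) hK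
      _ = K * ∏ i, psi1 r (x i) (y i) := mul_comm _ _
  · push_neg at hyr
    obtain ⟨i, hi⟩ := hyr
    have hry : r < ‖y‖ :=
      lt_of_lt_of_le hi (by simpa [Real.norm_eq_abs] using norm_le_pi_norm y i)
    rw [hF0 y hry, smul_zero, norm_zero]
    exact mul_nonneg hK (Finset.prod_nonneg fun i _ => psi1_nonneg r _ _)

lemma prod_psi1_integrable (r : ℝ) (x : V3) :
    Integrable (fun y : V3 => ∏ i, psi1 r (x i) (y i)) :=
  Integrable.fintype_prod (f := fun i => psi1 r (x i)) fun i => psi1_integrable r (x i)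

lemma prod_psi1_integral_le {r : ℝ} (hr : 0 < r) (x : V3) :
    ∫ y : V3, ∏ i, psi1 r (x i) (y i) ≤ (B1 r) ^ (3:ℕ) := by
  rw [volume_pi, integral_fintype_prod_eq_prod (ι := Fin 3) (fun i => psi1 r (x i))]
  calc ∏ i : Fin 3, ∫ t, psi1 r (x i) t ≤ ∏ _i : Fin 3, B1 r :=
      Finset.prod_le_prod (fun i _ => integral_nonneg (psi1_nonneg r _))
        (fun i _ => psi1_integral_le hr _)
    _ = (B1 r) ^ (3:ℕ) := by rw [Finset.prod_const]; norm_num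

lemma inner_aesm (x : V3) (hA : ContDiff ℝ 1 A) (hBc : Continuous B) :
    AEStronglyMeasurable (fun y : V3 =>
      ∫ w : V3, ((enorm3 (x - y))⁻¹ * B (y, w)) • cross3 w (gradv A (y, w))) volume := by
  have hsm : StronglyMeasurable (fun p : V3 × V3 =>
      ((enorm3 (x - p.1))⁻¹ * B (p.1, p.2)) • cross3 p.2 (gradv A (p.1, p.2))) := by
    apply Measurable.stronglyMeasurable
    apply Measurable.fun_smul
    · exact ((continuous_enorm3.comp (continuous_const.sub continuous_fst)).measurable.inv).mul
        (hBc.measurable.comp (continuous_fst.prodMk continuous_snd).measurable)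
    · exact (continuous_cross3 continuous_snd
        ((gradv_continuous hA).comp (continuous_fst.prodMk continuous_snd))).measurable
  exact (hsm.integral_prod_right').aestronglyMeasurable

lemma inner_eq (x : V3) (A B : Z6 → ℝ) (y : V3) :
    (∫ w : V3, ((enorm3 (x - y))⁻¹ * B (y, w)) • cross3 w (gradv A (y, w)))
      = (enorm3 (x - y))⁻¹ • Jv A B y := by
  unfold Jv
  rw [← integral_smul]
  congr 1
  funext w
  rw [mul_smul]

end FFL

/-- Lipschitz dependence of the reconstructed magnetic field
`B = −(1/(4πλ)) ∫∫ |x−y|⁻¹ (w × ∂_v f) g dw dy` on `(f,g)`: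
`sup_x |B − B̃| ≤ (C/λ)(‖f − f̃‖_∞ + ‖g − g̃‖_∞)` with `C = C(r,M)`. -/
theorem field_formula_lipschitz
    (r M : ℝ) (hr : 0 < r) (hM : 0 < M) :
    ∃ C > (0:ℝ), ∀ lam : ℝ, 0 < lam →
      ∀ f g f' g' : Z6 → ℝ,
        ContDiff ℝ 1 f → SuppBall0 r f → (∀ z, |f z| ≤ M ∧ ‖fderiv ℝ f z‖ ≤ M) →
        ContDiff ℝ 1 g → SuppBall0 r g → (∀ z, |g z| ≤ M ∧ ‖fderiv ℝ g z‖ ≤ M) →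
        ContDiff ℝ 1 f' → SuppBall0 r f' → (∀ z, |f' z| ≤ M ∧ ‖fderiv ℝ f' z‖ ≤ M) →
        ContDiff ℝ 1 g' → SuppBall0 r g' → (∀ z, |g' z| ≤ M ∧ ‖fderiv ℝ g' z‖ ≤ M) →
        ∀ x : V3,
          enorm3 (fieldOf lam f g x - fieldOf lam f' g' x)
            ≤ C / lam * ((⨆ z : Z6, |f z - f' z|) + ⨆ z : Z6, |g z - g' z|) := by
  classical
  set Vr : ℝ := (volume (Metric.closedBall (0:V3) r)).toReal with hVr
  have hVr0 : 0 ≤ Vr := ENNReal.toReal_nonneg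
  have hB10 : 0 ≤ FFL.B1 r := (FFL.B1_pos hr).le
  set C0 : ℝ := Real.sqrt 3 * (4 * Real.pi)⁻¹ * (Vr * (2 * (r * M))) * (FFL.B1 r) ^ (3:ℕ)
    with hC0
  have hC00 : 0 ≤ C0 := by
    have hpi := Real.pi_pos
    positivity
  refine ⟨C0 + 1, by positivity, ?_⟩
  intro lam hlam f g f' g' hf1 hfs hfM hg1 hgs hgM hf'1 hf's hf'M hg'1 hg's hg'M x
  set Su := ⨆ z : Z6, |f z - f' z| with hSu
  set Sd := ⨆ z : Z6, |g z - g' z| with hSd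
  have hSu0 : 0 ≤ Su := Real.iSup_nonneg fun z => abs_nonneg _
  have hSd0 : 0 ≤ Sd := Real.iSup_nonneg fun z => abs_nonneg _
  have habs_bound : ∀ (a b : Z6 → ℝ), (∀ z, |a z| ≤ M) → (∀ z, |b z| ≤ M) →
      ∀ z : Z6, |a z - b z| ≤ 2 * M := by
    intro a b ha hb z
    have h1 : |a z - b z| ≤ |a z| + |b z| := by
      simpa [sub_eq_add_neg, abs_neg] using abs_add_le (a z) (-(b z))
    have := ha z; have := hb z
    linarith
  have hSub : ∀ z, |f z - f' z| ≤ Su := by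
    intro z
    apply le_ciSup (f := fun z : Z6 => |f z - f' z|)
    refine ⟨2 * M, ?_⟩
    rintro _ ⟨z', rfl⟩
    exact habs_bound f f' (fun z => (hfM z).1) (fun z => (hf'M z).1) z' 
  have hSdb : ∀ z, |g z - g' z| ≤ Sd := by
    intro z
    apply le_ciSup (f := fun z : Z6 => |g z - g' z|)
    refine ⟨2 * M, ?_⟩
    rintro _ ⟨z', rfl⟩
    exact habs_bound g g' (fun z => (hgM z).1) (fun z => (hg'M z).1) z' 
  have hu1 : ContDiff ℝ 1 (fun z => f z - f' z) := hf1.sub hf'1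
  have hd1 : ContDiff ℝ 1 (fun z => g z - g' z) := hg1.sub hg'1
  have hus : SuppBall0 r (fun z => f z - f' z) := by
    intro z hz
    show f z - f' z = 0
    rw [hfs z hz, hf's z hz, sub_zero]
  have hds : SuppBall0 r (fun z => g z - g' z) := by
    intro z hz
    show g z - g' z = 0
    rw [hgs z hz, hg's z hz, sub_zero]
  set I1 : V3 → V3 := fun y =>
    ∫ w : V3, ((enorm3 (x - y))⁻¹ * g (y, w)) • cross3 w (gradv f (y, w)) with hI1
  set I2 : V3 → V3 := fun y =>
    ∫ w : V3, ((enorm3 (x - y))⁻¹ * g' (y, w)) • cross3 w (gradv f' (y, w)) with hI2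
  have hfieldeq : fieldOf lam f g x - fieldOf lam f' g' x
      = (-(1 / (4 * Real.pi * lam))) • ((∫ y : V3, I1 y) - (∫ y : V3, I2 y)) := by
    rw [smul_sub]
    rfl
  have hI1eq : ∀ y, I1 y = (enorm3 (x - y))⁻¹ • FFL.Jv f g y := fun y => FFL.inner_eq x f g y
  have hI2eq : ∀ y, I2 y = (enorm3 (x - y))⁻¹ • FFL.Jv f' g' y :=
    fun y => FFL.inner_eq x f' g' y
  have hJ1dom := FFL.dom_ae hr x (fun y => FFL.Jv f g y) (K := Vr * (M * (2 * (r * M))))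
    (by positivity)
    (fun y => FFL.Jv_norm_le hr.le hf1 hfs hM.le (fun z => (hfM z).2) hg1.continuous hgs
      hM.le (fun z => (hgM z).1) y)
    (fun y hy => FFL.Jv_eq_zero hf1 hfs hy)
  have hJ2dom := FFL.dom_ae hr x (fun y => FFL.Jv f' g' y) (K := Vr * (M * (2 * (r * M))))
    (by positivity)
    (fun y => FFL.Jv_norm_le hr.le hf'1 hf's hM.le (fun z => (hf'M z).2) hg'1.continuous hg's
      hM.le (fun z => (hg'M z).1) y)
    (fun y hy => FFL.Jv_eq_zero hf'1 hf's hy)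
  have hI1int : Integrable I1 := by
    refine Integrable.mono' ((FFL.prod_psi1_integrable r x).const_mul (Vr * (M * (2 * (r * M)))))
      (FFL.inner_aesm x hf1 hg1.continuous) ?_
    filter_upwards [hJ1dom] with y hy
    rw [show I1 y = (enorm3 (x - y))⁻¹ • FFL.Jv f g y from hI1eq y]
    exact hy
  have hI2int : Integrable I2 := by
    refine Integrable.mono' ((FFL.prod_psi1_integrable r x).const_mul (Vr * (M * (2 * (r * M)))))
      (FFL.inner_aesm x hf'1 hg'1.continuous) ?_
    filter_upwards [hJ2dom] with y hy
    rw [show I2 y = (enorm3 (x - y))⁻¹ • FFL.Jv f' g' y from hI2eq y]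
    exact hy
  have hdecomp : ∀ y : V3, I1 y - I2 y
      = (enorm3 (x - y))⁻¹ •
        (- FFL.Jv g (fun z => f z - f' z) y + FFL.Jv f' (fun z => g z - g' z) y) := by
    intro y
    rw [hI1eq y, hI2eq y, ← smul_sub]
    congr 1
    have e1 : FFL.Jv (fun z => f z - f' z) g y = FFL.Jv f g y - FFL.Jv f' g y :=
      FFL.Jv_sub_left hf1 hf'1 hfs hf's hg1.continuous y
    have e2 : FFL.Jv f' (fun z => g z - g' z) y = FFL.Jv f' g y - FFL.Jv f' g' y :=
      FFL.Jv_sub_right hf'1 hf's hg1.continuous hg'1.continuous y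
    have e3 : FFL.Jv (fun z => f z - f' z) g y = - FFL.Jv g (fun z => f z - f' z) y :=
      FFL.Jv_antisymm hu1 hg1 hus hgs y
    rw [← e3, e1, e2]
    abel
  set Ksum : ℝ := Vr * (Su * (2 * (r * M))) + Vr * (Sd * (2 * (r * M))) with hKsum
  have hKsum0 : 0 ≤ Ksum := by positivity
  have hFle : ∀ y, ‖- FFL.Jv g (fun z => f z - f' z) y + FFL.Jv f' (fun z => g z - g' z) y‖
      ≤ Ksum := by
    intro y
    calc ‖- FFL.Jv g (fun z => f z - f' z) y + FFL.Jv f' (fun z => g z - g' z) y‖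
        ≤ ‖- FFL.Jv g (fun z => f z - f' z) y‖ + ‖FFL.Jv f' (fun z => g z - g' z) y‖ :=
          norm_add_le _ _
      _ = ‖FFL.Jv g (fun z => f z - f' z) y‖ + ‖FFL.Jv f' (fun z => g z - g' z) y‖ := by
          rw [norm_neg]
      _ ≤ Vr * (Su * (2 * (r * M))) + Vr * (Sd * (2 * (r * M))) := add_le_add
          (FFL.Jv_norm_le hr.le hg1 hgs hM.le (fun z => (hgM z).2) hu1.continuous hus
            hSu0 hSub y)
          (FFL.Jv_norm_le hr.le hf'1 hf's hM.le (fun z => (hf'M z).2) hd1.continuous hds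
            hSd0 hSdb y)
  have hF0 : ∀ y : V3, r < ‖y‖ →
      - FFL.Jv g (fun z => f z - f' z) y + FFL.Jv f' (fun z => g z - g' z) y = 0 := by
    intro y hy
    rw [FFL.Jv_eq_zero hg1 hgs hy, FFL.Jv_eq_zero hf'1 hf's hy]
    simp
  have hdom := FFL.dom_ae hr x
    (fun y => - FFL.Jv g (fun z => f z - f' z) y + FFL.Jv f' (fun z => g z - g' z) y)
    hKsum0 hFle hF0
  have hnorm_int : ‖∫ y : V3, (I1 y - I2 y)‖ ≤ Ksum * (FFL.B1 r) ^ (3:ℕ) := by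
    calc ‖∫ y : V3, (I1 y - I2 y)‖ ≤ ∫ y : V3, Ksum * ∏ i, FFL.psi1 r (x i) (y i) := by
          apply norm_integral_le_of_norm_le ((FFL.prod_psi1_integrable r x).const_mul Ksum)
          filter_upwards [hdom] with y hy
          rw [hdecomp y]
          exact hy
      _ = Ksum * ∫ y : V3, ∏ i, FFL.psi1 r (x i) (y i) := integral_const_mul Ksum _
      _ ≤ Ksum * (FFL.B1 r) ^ (3:ℕ) :=
          mul_le_mul_of_nonneg_left (FFL.prod_psi1_integral_le hr x) hKsum0
  have habs : |(-(1 / (4 * Real.pi * lam)))| = (4 * Real.pi)⁻¹ * lam⁻¹ := by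
    have hpi := Real.pi_pos
    rw [abs_neg, abs_of_nonneg (by positivity), one_div, mul_inv]
  have hlast : Real.sqrt 3 * ((4 * Real.pi)⁻¹ * lam⁻¹ * (Ksum * (FFL.B1 r) ^ (3:ℕ)))
      = C0 / lam * (Su + Sd) := by
    rw [hC0, hKsum, div_eq_mul_inv]
    ring
  calc enorm3 (fieldOf lam f g x - fieldOf lam f' g' x)
      ≤ Real.sqrt 3 * ‖fieldOf lam f g x - fieldOf lam f' g' x‖ :=
        FFL.enorm3_le_sqrt3_norm _
    _ = Real.sqrt 3 * (|(-(1 / (4 * Real.pi * lam)))| * ‖(∫ y : V3, I1 y) - ∫ y : V3, I2 y‖) := by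
        rw [hfieldeq, norm_smul, Real.norm_eq_abs]
    _ = Real.sqrt 3 * ((4 * Real.pi)⁻¹ * lam⁻¹ * ‖∫ y : V3, (I1 y - I2 y)‖) := by
        rw [habs, ← integral_sub hI1int hI2int]
    _ ≤ Real.sqrt 3 * ((4 * Real.pi)⁻¹ * lam⁻¹ * (Ksum * (FFL.B1 r) ^ (3:ℕ))) := by
        have hpi := Real.pi_pos
        gcongr
    _ = C0 / lam * (Su + Sd) := hlast
    _ ≤ (C0 + 1) / lam * (Su + Sd) := by
        have h1 : C0 / lam ≤ (C0 + 1) / lam := by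
          gcongr
          linarith
        exact mul_le_mul_of_nonneg_right h1 (by positivity)

end
end
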